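/- arXiv:1811.01101 — 4 statements merged into one kernel-verified Lean document; each statement's English description precedes it below -/
import Mathlib

section
/- Let U_1 be uniform on the unit circle S¹ ⊂ ℝ² (identified with ℂ), and let Θ_2, Θ_3, ... be iid uniform on [-α, α] with α ∈ (0, π], independent of U_1. Define U_j = exp(iΘ_j)·U_{j-1} for j ≥ 2. Then for all j, k ≥ 1, the covariance matrix of U_j and U_{j+k} (as random vectors in ℝ²) equals (1/2)·(sinc α)^k · Id₂. -/
open MeasureTheory ProbabilityTheory Set Finset

/-- The uniform probability distribution on a set of positive finite volume. -/
noncomputable def unifOn (s : Set ℝ) : Measure ℝ :=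
  (volume s)⁻¹ • volume.restrict s

/-- The circle-valued random walk: `U j = exp(i(Θ_0 + Θ_1 + ⋯ + Θ_{j-1}))`, so that
`U 1 = exp(iΘ_0)` is uniform on the circle when `Θ_0` is uniform on `[0, 2π)`, and
`U j = exp(iΘ_{j-1}) · U_{j-1}` for `j ≥ 2`. -/
noncomputable def walkU (Θ : ℕ → Ω → ℝ) (j : ℕ) (ω : Ω) : ℂ :=
  Complex.exp (Complex.I * (∑ i ∈ Finset.range j, Θ i ω))

/-- The `(a,b)` entry of the covariance matrix of two centered `ℝ²`-valued (identified
with `ℂ`-valued) random vectors: `E[X_a Y_b]` where index `0` is the real part and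
index `1` the imaginary part. -/
noncomputable def covEntry {Ω : Type*} [MeasureSpace Ω] (P : Measure Ω)
    (X Y : Ω → ℂ) (a b : Fin 2) : ℝ :=
  ∫ ω, (if a = 0 then (X ω).re else (X ω).im) * (if b = 0 then (Y ω).re else (Y ω).im) ∂P

section AuxLemmas

variable {Ω : Type*} [MeasureSpace Ω] {P : Measure Ω} [IsProbabilityMeasure P]

lemma my_int_of_bdd {f : Ω → ℝ} (hf : Measurable f) {C : ℝ} (hC : ∀ ω, |f ω| ≤ C) :
    Integrable f P :=
  ⟨hf.aestronglyMeasurable, HasFiniteIntegral.of_bounded (ae_of_all _ (by simpa using hC))⟩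

lemma my_indep_sums {Θ : ℕ → Ω → ℝ} (hindep : iIndepFun Θ P)
    (hmeas : ∀ i, Measurable (Θ i)) (S T : Finset ℕ) (hST : Disjoint S T) :
    IndepFun (fun ω => ∑ i ∈ S, Θ i ω) (fun ω => ∑ i ∈ T, Θ i ω) P := by
  have h := hindep.indepFun_finset S T hST hmeas
  have h1 : Measurable (fun v : S → ℝ => ∑ i, v i) :=
    Finset.measurable_sum _ (fun i _ => measurable_pi_apply i)
  have h2 : Measurable (fun v : T → ℝ => ∑ i, v i) :=
    Finset.measurable_sum _ (fun i _ => measurable_pi_apply i)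
  have := h.comp h1 h2
  convert this using 1 <;> funext ω <;> exact (Finset.sum_attach _ _).symm

lemma my_mul_int {X Y : Ω → ℝ} (h : IndepFun X Y P) (hX : Measurable X) (hY : Measurable Y)
    {f g : ℝ → ℝ} (hf : Measurable f) (hg : Measurable g) :
    ∫ ω, f (X ω) * g (Y ω) ∂P = (∫ ω, f (X ω) ∂P) * ∫ ω, g (Y ω) ∂P :=
  IndepFun.integral_mul_eq_mul_integral (h.comp hf hg) ((hf.comp hX).aestronglyMeasurable)
    ((hg.comp hY).aestronglyMeasurable)

lemma my_intmul {X Y : Ω → ℝ} (hX : Measurable X) (hY : Measurable Y)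
    {f g : ℝ → ℝ} (hf : Measurable f) (hg : Measurable g)
    (hfb : ∀ x, |f x| ≤ 1) (hgb : ∀ x, |g x| ≤ 1) :
    Integrable (fun ω => f (X ω) * g (Y ω)) P := by
  refine my_int_of_bdd ((hf.comp hX).mul (hg.comp hY)) (C := 1) (fun ω => ?_)
  rw [abs_mul]
  nlinarith [hfb (X ω), hgb (Y ω), abs_nonneg (f (X ω)), abs_nonneg (g (Y ω))]

lemma my_sub_formula {X Y : Ω → ℝ} (h : IndepFun X Y P) (hX : Measurable X) (hY : Measurable Y)
    (f₁ g₁ f₂ g₂ : ℝ → ℝ) (hf₁ : Measurable f₁) (hg₁ : Measurable g₁)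
    (hf₂ : Measurable f₂) (hg₂ : Measurable g₂)
    (hf₁b : ∀ x, |f₁ x| ≤ 1) (hg₁b : ∀ x, |g₁ x| ≤ 1)
    (hf₂b : ∀ x, |f₂ x| ≤ 1) (hg₂b : ∀ x, |g₂ x| ≤ 1) :
    ∫ ω, (f₁ (X ω) * g₁ (Y ω) - f₂ (X ω) * g₂ (Y ω)) ∂P
      = (∫ ω, f₁ (X ω) ∂P) * (∫ ω, g₁ (Y ω) ∂P)
        - (∫ ω, f₂ (X ω) ∂P) * (∫ ω, g₂ (Y ω) ∂P) := by
  rw [integral_sub (my_intmul hX hY hf₁ hg₁ hf₁b hg₁b) (my_intmul hX hY hf₂ hg₂ hf₂b hg₂b),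
    my_mul_int h hX hY hf₁ hg₁, my_mul_int h hX hY hf₂ hg₂]

lemma my_add_formula {X Y : Ω → ℝ} (h : IndepFun X Y P) (hX : Measurable X) (hY : Measurable Y)
    (f₁ g₁ f₂ g₂ : ℝ → ℝ) (hf₁ : Measurable f₁) (hg₁ : Measurable g₁)
    (hf₂ : Measurable f₂) (hg₂ : Measurable g₂)
    (hf₁b : ∀ x, |f₁ x| ≤ 1) (hg₁b : ∀ x, |g₁ x| ≤ 1)
    (hf₂b : ∀ x, |f₂ x| ≤ 1) (hg₂b : ∀ x, |g₂ x| ≤ 1) :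
    ∫ ω, (f₁ (X ω) * g₁ (Y ω) + f₂ (X ω) * g₂ (Y ω)) ∂P
      = (∫ ω, f₁ (X ω) ∂P) * (∫ ω, g₁ (Y ω) ∂P)
        + (∫ ω, f₂ (X ω) ∂P) * (∫ ω, g₂ (Y ω) ∂P) := by
  rw [integral_add (my_intmul hX hY hf₁ hg₁ hf₁b hg₁b) (my_intmul hX hY hf₂ hg₂ hf₂b hg₂b),
    my_mul_int h hX hY hf₁ hg₁, my_mul_int h hX hY hf₂ hg₂]

end AuxLemmas

lemma unifOn_Icc_integral {a b : ℝ} (hab : a ≤ b) (g : ℝ → ℝ) :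
    ∫ x, g x ∂(unifOn (Icc a b)) = (b - a)⁻¹ * ∫ x in a..b, g x := by
  rw [unifOn, integral_smul_measure, Real.volume_Icc, smul_eq_mul, ENNReal.toReal_inv,
    ENNReal.toReal_ofReal (by linarith), integral_Icc_eq_integral_Ioc,
    ← intervalIntegral.integral_of_le hab]

lemma unifOn_Ico_integral {a b : ℝ} (hab : a ≤ b) (g : ℝ → ℝ) :
    ∫ x, g x ∂(unifOn (Ico a b)) = (b - a)⁻¹ * ∫ x in a..b, g x := by
  rw [unifOn, integral_smul_measure, Real.volume_Ico, smul_eq_mul, ENNReal.toReal_inv,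
    ENNReal.toReal_ofReal (by linarith), integral_Ico_eq_integral_Ioo,
    ← integral_Ioc_eq_integral_Ioo, ← intervalIntegral.integral_of_le hab]

lemma my_momA {α : ℝ} (hα : 0 < α) :
    ∫ x, Real.cos x ∂(unifOn (Icc (-α) α)) = Real.sin α / α := by
  rw [unifOn_Icc_integral (by linarith), integral_cos, Real.sin_neg]
  field_simp

lemma my_momB {α : ℝ} (hα : 0 < α) : ∫ x, Real.sin x ∂(unifOn (Icc (-α) α)) = 0 := by
  rw [unifOn_Icc_integral (by linarith), integral_sin, Real.cos_neg]
  ring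

lemma my_momC : ∫ x, Real.cos (2 * x) ∂(unifOn (Ico 0 (2 * Real.pi))) = 0 := by
  have hπ := Real.pi_pos
  have h := intervalIntegral.mul_integral_comp_mul_left (a := 0) (b := 2 * Real.pi)
    (f := Real.cos) (c := 2)
  rw [integral_cos, mul_zero] at h
  have h4 : Real.sin (2 * (2 * Real.pi)) = 0 := by
    have : (2 : ℝ) * (2 * Real.pi) = (4 : ℕ) * Real.pi := by push_cast; ring
    rw [this, Real.sin_nat_mul_pi]
  rw [h4, Real.sin_zero, sub_zero] at h
  rw [unifOn_Ico_integral (by linarith)]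
  have : ∫ x in (0 : ℝ)..2 * Real.pi, Real.cos (2 * x) = 0 := by linarith
  rw [this, mul_zero]

lemma my_momD : ∫ x, Real.sin (2 * x) ∂(unifOn (Ico 0 (2 * Real.pi))) = 0 := by
  have hπ := Real.pi_pos
  have h := intervalIntegral.mul_integral_comp_mul_left (a := 0) (b := 2 * Real.pi)
    (f := Real.sin) (c := 2)
  rw [integral_sin, mul_zero] at h
  have h4 : Real.cos (2 * (2 * Real.pi)) = 1 := by
    have : (2 : ℝ) * (2 * Real.pi) = (2 : ℕ) * (2 * Real.pi) := by push_cast; ring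
    rw [this, Real.cos_nat_mul_two_pi]
  rw [h4, Real.cos_zero] at h
  rw [unifOn_Ico_integral (by linarith)]
  have : ∫ x in (0 : ℝ)..2 * Real.pi, Real.sin (2 * x) = 0 := by linarith
  rw [this, mul_zero]

/-- For the circle random walk driven by iid angles uniform on `[-α, α]`, `α ∈ (0, π]`,
the covariance matrix of `U_j` and `U_{j+k}` equals `(1/2)·(sinc α)^k · Id₂`. -/
theorem stmt_1 {Ω : Type*} [MeasureSpace Ω] (P : Measure Ω) [IsProbabilityMeasure P]
    (α : ℝ) (hα : 0 < α) (hαπ : α ≤ Real.pi)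
    (Θ : ℕ → Ω → ℝ) (hmeas : ∀ i, Measurable (Θ i))
    (hindep : iIndepFun Θ P)
    (h0 : Measure.map (Θ 0) P = unifOn (Ico 0 (2 * Real.pi)))
    (hunif : ∀ i ≥ 1, Measure.map (Θ i) P = unifOn (Icc (-α) α))
    (j k : ℕ) (hj : 1 ≤ j) (hk : 1 ≤ k) :
    (Matrix.of fun a b => covEntry P (walkU Θ j) (walkU Θ (j + k)) a b) =
      ((1 / 2) * (Real.sin α / α) ^ k) • (1 : Matrix (Fin 2) (Fin 2) ℝ) := by
  classical
  set c : ℝ := Real.sin α / α with hc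
  set S : Ω → ℝ := fun ω => ∑ i ∈ Finset.range j, Θ i ω with hSdef
  set T : Ω → ℝ := fun ω => ∑ i ∈ Finset.Ico j (j + k), Θ i ω with hTdef
  set R : Ω → ℝ := fun ω => ∑ i ∈ Finset.Ico 1 j, Θ i ω with hRdef
  have hSm : Measurable S := Finset.measurable_sum _ fun i _ => hmeas i
  have hTm : Measurable T := Finset.measurable_sum _ fun i _ => hmeas i
  have hRm : Measurable R := Finset.measurable_sum _ fun i _ => hmeas i
  have hcos1 : ∀ x : ℝ, |Real.cos x| ≤ 1 := fun x => Real.abs_cos_le_one x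
  have hsin1 : ∀ x : ℝ, |Real.sin x| ≤ 1 := fun x => Real.abs_sin_le_one x
  have hcc1 : ∀ x : ℝ, |Real.cos x * Real.cos x| ≤ 1 := fun x => by
    rw [abs_mul]; nlinarith [hcos1 x, abs_nonneg (Real.cos x)]
  have hss1 : ∀ x : ℝ, |Real.sin x * Real.sin x| ≤ 1 := fun x => by
    rw [abs_mul]; nlinarith [hsin1 x, abs_nonneg (Real.sin x)]
  have hcs1 : ∀ x : ℝ, |Real.cos x * Real.sin x| ≤ 1 := fun x => by
    rw [abs_mul]
    nlinarith [hcos1 x, hsin1 x, abs_nonneg (Real.cos x), abs_nonneg (Real.sin x)]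
  have hsc1 : ∀ x : ℝ, |Real.sin x * Real.cos x| ≤ 1 := fun x => by
    rw [abs_mul]
    nlinarith [hcos1 x, hsin1 x, abs_nonneg (Real.cos x), abs_nonneg (Real.sin x)]
  -- independence facts
  have hST : IndepFun S T P := by
    have := my_indep_sums hindep hmeas (Finset.range j) (Finset.Ico j (j + k))
      (by rw [Finset.range_eq_Ico]; exact Finset.Ico_disjoint_Ico_consecutive 0 j (j + k))
    exact this
  have h0R : IndepFun (Θ 0) R P := by
    have := my_indep_sums hindep hmeas {0} (Finset.Ico 1 j) (by simp)
    simpa using this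
  -- splitting of sums
  have hSsplit : ∀ ω, S ω = Θ 0 ω + R ω := by
    intro ω
    rw [hSdef, Finset.range_eq_Ico]
    exact Finset.sum_eq_sum_Ico_succ_bot hj _
  have hSTsplit : ∀ ω, (∑ i ∈ Finset.range (j + k), Θ i ω) = S ω + T ω := by
    intro ω
    simp only [hSdef, hTdef, Finset.range_eq_Ico]
    exact (Finset.sum_Ico_consecutive _ (Nat.zero_le j) (Nat.le_add_right j k)).symm
  have hSapp : ∀ ω, (∑ i ∈ Finset.range j, Θ i ω) = S ω := fun _ => rfl
  -- moments of the angles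
  have hgenΘ : ∀ i : ℕ, 1 ≤ i → ∀ g : ℝ → ℝ, Measurable g →
      ∫ ω, g (Θ i ω) ∂P = ∫ x, g x ∂(unifOn (Icc (-α) α)) := by
    intro i hi g hg
    rw [← hunif i hi, integral_map (hmeas i).aemeasurable hg.aestronglyMeasurable]
  have hgen0 : ∀ g : ℝ → ℝ, Measurable g →
      ∫ ω, g (Θ 0 ω) ∂P = ∫ x, g x ∂(unifOn (Ico 0 (2 * Real.pi))) := by
    intro g hg
    rw [← h0, integral_map (hmeas 0).aemeasurable hg.aestronglyMeasurable]
  have EcosΘ : ∀ i, 1 ≤ i → ∫ ω, Real.cos (Θ i ω) ∂P = c := fun i hi => by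
    rw [hgenΘ i hi _ Real.measurable_cos, my_momA hα]
  have EsinΘ : ∀ i, 1 ≤ i → ∫ ω, Real.sin (Θ i ω) ∂P = 0 := fun i hi => by
    rw [hgenΘ i hi _ Real.measurable_sin, my_momB hα]
  have Ecos2Θ0 : ∫ ω, Real.cos (2 * Θ 0 ω) ∂P = 0 := by
    rw [hgen0 (fun x => Real.cos (2 * x)) (by fun_prop), my_momC]
  have Esin2Θ0 : ∫ ω, Real.sin (2 * Θ 0 ω) ∂P = 0 := by
    rw [hgen0 (fun x => Real.sin (2 * x)) (by fun_prop), my_momD]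
  -- double angle moments of S
  have hcos2m : Measurable (fun x : ℝ => Real.cos (2 * x)) := by fun_prop
  have hsin2m : Measurable (fun x : ℝ => Real.sin (2 * x)) := by fun_prop
  have hcos21 : ∀ x : ℝ, |Real.cos (2 * x)| ≤ 1 := fun x => hcos1 _
  have hsin21 : ∀ x : ℝ, |Real.sin (2 * x)| ≤ 1 := fun x => hsin1 _
  have Ecos2S : ∫ ω, Real.cos (2 * S ω) ∂P = 0 := by
    have key := my_sub_formula h0R (hmeas 0) hRm
      (fun x => Real.cos (2 * x)) (fun x => Real.cos (2 * x))
      (fun x => Real.sin (2 * x)) (fun x => Real.sin (2 * x))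
      hcos2m hcos2m hsin2m hsin2m hcos21 hcos21 hsin21 hsin21
    calc ∫ ω, Real.cos (2 * S ω) ∂P
        = ∫ ω, (Real.cos (2 * Θ 0 ω) * Real.cos (2 * R ω)
            - Real.sin (2 * Θ 0 ω) * Real.sin (2 * R ω)) ∂P := by
          refine integral_congr_ae (Filter.EventuallyEq.of_eq (funext fun ω => ?_))
          rw [hSsplit ω, mul_add, Real.cos_add]
      _ = 0 := by rw [key, Ecos2Θ0, Esin2Θ0]; ring
  have Esin2S : ∫ ω, Real.sin (2 * S ω) ∂P = 0 := by
    have key := my_add_formula h0R (hmeas 0) hRm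
      (fun x => Real.sin (2 * x)) (fun x => Real.cos (2 * x))
      (fun x => Real.cos (2 * x)) (fun x => Real.sin (2 * x))
      hsin2m hcos2m hcos2m hsin2m hsin21 hcos21 hcos21 hsin21
    calc ∫ ω, Real.sin (2 * S ω) ∂P
        = ∫ ω, (Real.sin (2 * Θ 0 ω) * Real.cos (2 * R ω)
            + Real.cos (2 * Θ 0 ω) * Real.sin (2 * R ω)) ∂P := by
          refine integral_congr_ae (Filter.EventuallyEq.of_eq (funext fun ω => ?_))
          rw [hSsplit ω, mul_add, Real.sin_add]
      _ = 0 := by rw [key, Esin2Θ0, Ecos2Θ0]; ring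
  -- second moments of S
  have intcos2S : Integrable (fun ω => Real.cos (2 * S ω) / 2) P := by
    refine my_int_of_bdd (by fun_prop) (C := 1) (fun ω => ?_)
    rw [abs_div, abs_two]
    linarith [hcos1 (2 * S ω)]
  have EcoscosS : ∫ ω, Real.cos (S ω) * Real.cos (S ω) ∂P = 1 / 2 := by
    calc ∫ ω, Real.cos (S ω) * Real.cos (S ω) ∂P
        = ∫ ω, (1 / 2 + Real.cos (2 * S ω) / 2) ∂P := by
          refine integral_congr_ae (Filter.EventuallyEq.of_eq (funext fun ω => ?_))
          nlinarith [Real.cos_sq (S ω)]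
      _ = 1 / 2 := by
          rw [integral_add (integrable_const _) intcos2S, integral_div, integral_div, Ecos2S]
          simp
  have EsinsinS : ∫ ω, Real.sin (S ω) * Real.sin (S ω) ∂P = 1 / 2 := by
    calc ∫ ω, Real.sin (S ω) * Real.sin (S ω) ∂P
        = ∫ ω, (1 / 2 - Real.cos (2 * S ω) / 2) ∂P := by
          refine integral_congr_ae (Filter.EventuallyEq.of_eq (funext fun ω => ?_))
          nlinarith [Real.sin_sq_eq_half_sub (S ω)]
      _ = 1 / 2 := by
          rw [integral_sub (integrable_const _) intcos2S, integral_div, integral_div, Ecos2S]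
          simp
  have EcossinS : ∫ ω, Real.cos (S ω) * Real.sin (S ω) ∂P = 0 := by
    calc ∫ ω, Real.cos (S ω) * Real.sin (S ω) ∂P
        = ∫ ω, Real.sin (2 * S ω) / 2 ∂P := by
          refine integral_congr_ae (Filter.EventuallyEq.of_eq (funext fun ω => ?_))
          nlinarith [Real.sin_two_mul (S ω)]
      _ = 0 := by rw [integral_div, Esin2S]; simp
  have EsincosS : ∫ ω, Real.sin (S ω) * Real.cos (S ω) ∂P = 0 := by
    rw [← EcossinS]
    refine integral_congr_ae (Filter.EventuallyEq.of_eq (funext fun ω => ?_))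
    ring
  -- moments of partial sums over [j, j+m)
  have hTmom : ∀ m : ℕ, (∫ ω, Real.cos (∑ i ∈ Finset.Ico j (j + m), Θ i ω) ∂P = c ^ m)
      ∧ (∫ ω, Real.sin (∑ i ∈ Finset.Ico j (j + m), Θ i ω) ∂P = 0) := by
    intro m
    induction m with
    | zero => constructor <;> simp
    | succ n ih =>
      have hAm : Measurable (fun ω => ∑ i ∈ Finset.Ico j (j + n), Θ i ω) :=
        Finset.measurable_sum _ fun i _ => hmeas i
      have hind : IndepFun (fun ω => ∑ i ∈ Finset.Ico j (j + n), Θ i ω) (Θ (j + n)) P := by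
        have := my_indep_sums hindep hmeas (Finset.Ico j (j + n)) {j + n} (by simp)
        simpa using this
      have hsplit : ∀ ω, (∑ i ∈ Finset.Ico j (j + (n + 1)), Θ i ω)
          = (∑ i ∈ Finset.Ico j (j + n), Θ i ω) + Θ (j + n) ω := by
        intro ω
        have h' : j + (n + 1) = (j + n) + 1 := by omega
        rw [h', Finset.sum_Ico_succ_top (Nat.le_add_right j n)]
      have hjn : 1 ≤ j + n := by omega
      constructor
      · have key := my_sub_formula hind hAm (hmeas (j + n)) Real.cos Real.cos Real.sin Real.sin
          Real.measurable_cos Real.measurable_cos Real.measurable_sin Real.measurable_sin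
          hcos1 hcos1 hsin1 hsin1
        calc ∫ ω, Real.cos (∑ i ∈ Finset.Ico j (j + (n + 1)), Θ i ω) ∂P
            = ∫ ω, (Real.cos (∑ i ∈ Finset.Ico j (j + n), Θ i ω) * Real.cos (Θ (j + n) ω)
                - Real.sin (∑ i ∈ Finset.Ico j (j + n), Θ i ω) * Real.sin (Θ (j + n) ω)) ∂P := by
              refine integral_congr_ae (Filter.EventuallyEq.of_eq (funext fun ω => ?_))
              rw [hsplit ω, Real.cos_add]
          _ = c ^ (n + 1) := by rw [key, ih.1, ih.2, EcosΘ _ hjn, EsinΘ _ hjn]; ring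
      · have key := my_add_formula hind hAm (hmeas (j + n)) Real.sin Real.cos Real.cos Real.sin
          Real.measurable_sin Real.measurable_cos Real.measurable_cos Real.measurable_sin
          hsin1 hcos1 hcos1 hsin1
        calc ∫ ω, Real.sin (∑ i ∈ Finset.Ico j (j + (n + 1)), Θ i ω) ∂P
            = ∫ ω, (Real.sin (∑ i ∈ Finset.Ico j (j + n), Θ i ω) * Real.cos (Θ (j + n) ω)
                + Real.cos (∑ i ∈ Finset.Ico j (j + n), Θ i ω) * Real.sin (Θ (j + n) ω)) ∂P := by
              refine integral_congr_ae (Filter.EventuallyEq.of_eq (funext fun ω => ?_))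
              rw [hsplit ω, Real.sin_add]
          _ = 0 := by rw [key, ih.1, ih.2, EcosΘ _ hjn, EsinΘ _ hjn]; ring
  have EcosT : ∫ ω, Real.cos (T ω) ∂P = c ^ k := (hTmom k).1
  have EsinT : ∫ ω, Real.sin (T ω) ∂P = 0 := (hTmom k).2
  -- real and imaginary parts of walkU
  have hre : ∀ (n : ℕ) (ω : Ω), (walkU Θ n ω).re = Real.cos (∑ i ∈ Finset.range n, Θ i ω) := by
    intro n ω
    rw [walkU, mul_comm, Complex.exp_mul_I, ← Complex.ofReal_cos, ← Complex.ofReal_sin]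
    simp only [Complex.add_re, Complex.ofReal_re, Complex.mul_re, Complex.ofReal_im,
      Complex.I_re, Complex.I_im]
    ring
  have him : ∀ (n : ℕ) (ω : Ω), (walkU Θ n ω).im = Real.sin (∑ i ∈ Finset.range n, Θ i ω) := by
    intro n ω
    rw [walkU, mul_comm, Complex.exp_mul_I, ← Complex.ofReal_cos, ← Complex.ofReal_sin]
    simp only [Complex.add_im, Complex.ofReal_im, Complex.mul_im, Complex.ofReal_re,
      Complex.I_re, Complex.I_im]
    ring
  have hmcc : Measurable (fun x : ℝ => Real.cos x * Real.cos x) := Real.measurable_cos.mul Real.measurable_cos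
  have hmss : Measurable (fun x : ℝ => Real.sin x * Real.sin x) := Real.measurable_sin.mul Real.measurable_sin
  have hmcs : Measurable (fun x : ℝ => Real.cos x * Real.sin x) := Real.measurable_cos.mul Real.measurable_sin
  have hmsc : Measurable (fun x : ℝ => Real.sin x * Real.cos x) := Real.measurable_sin.mul Real.measurable_cos
  -- the four covariance entries
  have entry00 : (∫ ω, (walkU Θ j ω).re * (walkU Θ (j + k) ω).re ∂P) = 1 / 2 * c ^ k := by
    have key := my_sub_formula hST hSm hTm
      (fun x => Real.cos x * Real.cos x) Real.cos (fun x => Real.cos x * Real.sin x) Real.sin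
      hmcc Real.measurable_cos hmcs Real.measurable_sin hcc1 hcos1 hcs1 hsin1
    calc ∫ ω, (walkU Θ j ω).re * (walkU Θ (j + k) ω).re ∂P
        = ∫ ω, (Real.cos (S ω) * Real.cos (S ω) * Real.cos (T ω)
            - Real.cos (S ω) * Real.sin (S ω) * Real.sin (T ω)) ∂P := by
          refine integral_congr_ae (Filter.EventuallyEq.of_eq (funext fun ω => ?_))
          rw [hre, hre, hSTsplit ω, hSapp, Real.cos_add]
          ring
      _ = 1 / 2 * c ^ k := by rw [key, EcoscosS, EcossinS, EcosT, EsinT]; ring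
  have entry01 : (∫ ω, (walkU Θ j ω).re * (walkU Θ (j + k) ω).im ∂P) = 0 := by
    have key := my_add_formula hST hSm hTm
      (fun x => Real.cos x * Real.sin x) Real.cos (fun x => Real.cos x * Real.cos x) Real.sin
      hmcs Real.measurable_cos hmcc Real.measurable_sin hcs1 hcos1 hcc1 hsin1
    calc ∫ ω, (walkU Θ j ω).re * (walkU Θ (j + k) ω).im ∂P
        = ∫ ω, (Real.cos (S ω) * Real.sin (S ω) * Real.cos (T ω)
            + Real.cos (S ω) * Real.cos (S ω) * Real.sin (T ω)) ∂P := by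
          refine integral_congr_ae (Filter.EventuallyEq.of_eq (funext fun ω => ?_))
          rw [hre, him, hSTsplit ω, hSapp, Real.sin_add]
          ring
      _ = 0 := by rw [key, EcoscosS, EcossinS, EcosT, EsinT]; ring
  have entry10 : (∫ ω, (walkU Θ j ω).im * (walkU Θ (j + k) ω).re ∂P) = 0 := by
    have key := my_sub_formula hST hSm hTm
      (fun x => Real.sin x * Real.cos x) Real.cos (fun x => Real.sin x * Real.sin x) Real.sin
      hmsc Real.measurable_cos hmss Real.measurable_sin hsc1 hcos1 hss1 hsin1
    calc ∫ ω, (walkU Θ j ω).im * (walkU Θ (j + k) ω).re ∂P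
        = ∫ ω, (Real.sin (S ω) * Real.cos (S ω) * Real.cos (T ω)
            - Real.sin (S ω) * Real.sin (S ω) * Real.sin (T ω)) ∂P := by
          refine integral_congr_ae (Filter.EventuallyEq.of_eq (funext fun ω => ?_))
          rw [him, hre, hSTsplit ω, hSapp, Real.cos_add]
          ring
      _ = 0 := by rw [key, EsincosS, EsinsinS, EcosT, EsinT]; ring
  have entry11 : (∫ ω, (walkU Θ j ω).im * (walkU Θ (j + k) ω).im ∂P) = 1 / 2 * c ^ k := by
    have key := my_add_formula hST hSm hTm
      (fun x => Real.sin x * Real.sin x) Real.cos (fun x => Real.sin x * Real.cos x) Real.sin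
      hmss Real.measurable_cos hmsc Real.measurable_sin hss1 hcos1 hsc1 hsin1
    calc ∫ ω, (walkU Θ j ω).im * (walkU Θ (j + k) ω).im ∂P
        = ∫ ω, (Real.sin (S ω) * Real.sin (S ω) * Real.cos (T ω)
            + Real.sin (S ω) * Real.cos (S ω) * Real.sin (T ω)) ∂P := by
          refine integral_congr_ae (Filter.EventuallyEq.of_eq (funext fun ω => ?_))
          rw [him, him, hSTsplit ω, hSapp, Real.sin_add]
          ring
      _ = 1 / 2 * c ^ k := by rw [key, EsinsinS, EsincosS, EcosT, EsinT]; ring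
  -- conclude
  ext a b
  fin_cases a <;> fin_cases b
  · simpa [covEntry, Matrix.one_apply] using entry00
  · simpa [covEntry, Matrix.one_apply] using entry01
  · simpa [covEntry, Matrix.one_apply] using entry10
  · simpa [covEntry, Matrix.one_apply] using entry11
end

section
/- Let x : [0,1] → ℝ be L-Lipschitz. Define f_n(x) ∈ C([0,1], ℂ) by f_n(x)(t) = (1/n)[Σ_{k=1}^{⌊nt⌋} e^{i x(k/n)} + (nt - ⌊nt⌋) e^{i x((⌊nt⌋+1)/n)}] and f(x)(t) = ∫_0^t e^{i x(s)} ds. Then ‖f_n(x) - f(x)‖_∞ ≤ L/n. -/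
open Finset intervalIntegral


noncomputable def fnMap (n : ℕ) (x : ℝ → ℝ) (t : ℝ) : ℂ :=
  (1 / (n : ℂ)) * (∑ k ∈ Finset.Icc 1 ⌊(n : ℝ) * t⌋₊, Complex.exp (Complex.I * x (k / n)) +
    (((n : ℝ) * t - ⌊(n : ℝ) * t⌋₊ : ℝ) : ℂ) *
      Complex.exp (Complex.I * x ((⌊(n : ℝ) * t⌋₊ + 1 : ℕ) / n)))

noncomputable def fMap (x : ℝ → ℝ) (t : ℝ) : ℂ :=
  ∫ s in (0 : ℝ)..t, Complex.exp (Complex.I * x s)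

lemma exp_I_lip (a b : ℝ) :
    ‖Complex.exp (Complex.I * a) - Complex.exp (Complex.I * b)‖ ≤ |a - b| := by
  have h : LipschitzWith 1 (fun θ : ℝ => Complex.exp (Complex.I * θ)) := by
    have hd : ∀ θ : ℝ, HasDerivAt (fun θ : ℝ => Complex.exp (Complex.I * θ))
        (Complex.I * Complex.exp (Complex.I * θ)) θ := by
      intro θ
      have h1 : HasDerivAt (fun θ : ℝ => Complex.I * (θ : ℂ)) Complex.I θ := by
        simpa using ((Complex.ofRealCLM.hasDerivAt (x := θ)).const_mul Complex.I)
      exact ((Complex.hasDerivAt_exp _).comp θ h1).congr_deriv (mul_comm _ _)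
    apply lipschitzWith_of_nnnorm_deriv_le (fun θ => (hd θ).differentiableAt)
    intro θ
    rw [(hd θ).deriv, ← NNReal.coe_le_coe]
    simp [Complex.norm_exp]
  simpa [Real.dist_eq, dist_eq_norm] using h.dist_le_mul a b

/-- If `x : [0,1] → ℝ` is `L`-Lipschitz, then `‖f_n(x) - f(x)‖_∞ ≤ L/n`. -/
theorem stmt_9 (x : ℝ → ℝ) (L : ℝ) (hL : 0 ≤ L)
    (hx : ∀ s ∈ Set.Icc (0 : ℝ) 1, ∀ u ∈ Set.Icc (0 : ℝ) 1, |x s - x u| ≤ L * |s - u|)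
    (n : ℕ) (hn : 1 ≤ n) :
    ∀ t ∈ Set.Icc (0 : ℝ) 1, ‖fnMap n x t - fMap x t‖ ≤ L / n := by
  intro t ht
  obtain ⟨ht0, ht1⟩ := ht
  have hn0 : (0:ℝ) < n := by exact_mod_cast hn
  set g : ℝ → ℂ := fun s => Complex.exp (Complex.I * x s) with hg
  set m := ⌊(n : ℝ) * t⌋₊ with hmdef
  have hmle : (m : ℝ) ≤ n * t := Nat.floor_le (by positivity)
  have hmlt : (n : ℝ) * t < m + 1 := Nat.lt_floor_add_one _
  have hmn : m ≤ n := by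
    have : (m : ℝ) ≤ n := le_trans hmle (by nlinarith)
    exact_mod_cast this
  -- continuity of g on [0,1]
  have hxc : ContinuousOn x (Set.Icc 0 1) := by
    apply LipschitzOnWith.continuousOn (K := L.toNNReal)
    apply LipschitzOnWith.of_dist_le_mul
    intro p hp q hq
    simpa [Real.dist_eq, Real.coe_toNNReal L hL] using hx p hp q hq
  have hgc : ContinuousOn g (Set.Icc 0 1) :=
    Complex.continuous_exp.comp_continuousOn
      (continuous_const.continuousOn.mul (Complex.continuous_ofReal.comp_continuousOn hxc))
  have hint : ∀ a b : ℝ, 0 ≤ a → b ≤ 1 → a ≤ b → IntervalIntegrable g MeasureTheory.volume a b := by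
    intro a b ha hb hab
    apply ContinuousOn.intervalIntegrable
    apply hgc.mono
    rw [Set.uIcc_of_le hab]
    exact Set.Icc_subset_Icc ha hb
  -- interval endpoints in [0,1]
  have hkn : ∀ k : ℕ, k ≤ n → (k : ℝ) / n ≤ 1 := by
    intro k hk
    rw [div_le_one hn0]
    exact_mod_cast hk
  have hkmt : ∀ k : ℕ, k < m → ((k : ℝ) + 1) / n ≤ t := by
    intro k hk
    rw [div_le_iff₀ hn0]
    have : (k : ℝ) + 1 ≤ m := by exact_mod_cast hk
    linarith [hmle]
  have hmnt : (m : ℝ) / n ≤ t := by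
    rw [div_le_iff₀ hn0]; linarith
  -- split fMap
  have hsplit : fMap x t =
      (∑ k ∈ range m, ∫ s in ((k : ℝ) / n)..(((k : ℝ) + 1) / n), g s)
        + ∫ s in ((m : ℝ) / n)..t, g s := by
    have h1 : ∑ k ∈ range m, ∫ s in ((k : ℝ) / n)..(((k : ℝ) + 1) / n), g s
        = ∫ s in ((0 : ℕ) / (n : ℝ))..((m : ℝ) / n), g s := by
      have := intervalIntegral.sum_integral_adjacent_intervals
        (a := fun k : ℕ => (k : ℝ) / n) (n := m)
        (f := g) (μ := MeasureTheory.volume) ?_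
      · simpa using this
      · intro k hk
        have hkt : (((k:ℕ)+1 : ℕ) : ℝ)/n ≤ 1 := by
          push_cast; exact le_trans (hkmt k hk) ht1
        apply hint _ _ (by positivity) hkt
        rw [div_le_div_iff_of_pos_right hn0]
        push_cast; linarith
    rw [h1]
    simp only [Nat.cast_zero, zero_div]
    rw [intervalIntegral.integral_add_adjacent_intervals]
    · rfl
    · exact hint _ _ le_rfl (le_trans hmnt ht1) (by positivity)
    · exact hint _ _ (by positivity) ht1 hmnt
  -- rewrite fnMap
  have hfn : fnMap n x t =
      (∑ k ∈ range m, ((1 : ℝ) / n : ℝ) • Complex.exp (Complex.I * x (((k : ℝ) + 1) / n)))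
        + (t - (m : ℝ) / n) • Complex.exp (Complex.I * x ((((m : ℕ) + 1 : ℕ) : ℝ) / n)) := by
    unfold fnMap
    rw [← Finset.Ico_add_one_right_eq_Icc, Finset.sum_Ico_eq_sum_range]
    rw [mul_add, Finset.mul_sum]
    congr 1
    · apply Finset.sum_congr rfl
      intro k _
      rw [Complex.real_smul]
      push_cast
      ring_nf
    · have hnC : (n : ℂ) ≠ 0 := Nat.cast_ne_zero.mpr (by omega)
      rw [Complex.real_smul]
      push_cast
      rw [← hmdef]
      field_simp
  -- per-interval bound
  have hterm : ∀ k ∈ range m,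
      ‖((1:ℝ)/n) • Complex.exp (Complex.I * x (((k:ℝ)+1)/n))
        - ∫ s in ((k:ℝ)/n)..(((k:ℝ)+1)/n), g s‖ ≤ L / n * (1/n) := by
    intro k hk
    rw [Finset.mem_range] at hk
    have hab : (k:ℝ)/n ≤ ((k:ℝ)+1)/n := by
      rw [div_le_div_iff_of_pos_right hn0]; linarith
    have hbt : ((k:ℝ)+1)/n ≤ t := hkmt k hk
    have hb1 : ((k:ℝ)+1)/n ≤ 1 := le_trans hbt ht1
    have ha0 : (0:ℝ) ≤ (k:ℝ)/n := by positivity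
    have hintk : IntervalIntegrable g MeasureTheory.volume ((k:ℝ)/n) (((k:ℝ)+1)/n) :=
      hint _ _ ha0 hb1 hab
    have hconst : ((1:ℝ)/n) • Complex.exp (Complex.I * x (((k:ℝ)+1)/n))
        = ∫ _ in ((k:ℝ)/n)..(((k:ℝ)+1)/n), Complex.exp (Complex.I * x (((k:ℝ)+1)/n)) := by
      rw [intervalIntegral.integral_const]
      congr 1
      field_simp
      ring
    rw [hconst, ← intervalIntegral.integral_sub intervalIntegrable_const hintk]
    have hdiff : ((k:ℝ)+1)/n - (k:ℝ)/n = 1/n := by field_simp; ring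
    have := intervalIntegral.norm_integral_le_of_norm_le_const
      (a := (k:ℝ)/n) (b := ((k:ℝ)+1)/n) (C := L/n)
      (f := fun s => Complex.exp (Complex.I * x (((k:ℝ)+1)/n)) - g s) ?_
    · calc _ ≤ L/n * |((k:ℝ)+1)/n - (k:ℝ)/n| := this
        _ = L/n * (1/n) := by rw [hdiff, abs_of_nonneg (by positivity)]
    · intro s hs
      rw [Set.uIoc_of_le hab] at hs
      have hsmem : s ∈ Set.Icc (0:ℝ) 1 := ⟨le_trans ha0 hs.1.le, le_trans hs.2 hb1⟩
      have hbmem : ((k:ℝ)+1)/n ∈ Set.Icc (0:ℝ) 1 := ⟨by positivity, hb1⟩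
      calc ‖Complex.exp (Complex.I * x (((k:ℝ)+1)/n)) - g s‖
          ≤ |x (((k:ℝ)+1)/n) - x s| := exp_I_lip _ _
        _ ≤ L * |((k:ℝ)+1)/n - s| := hx _ hbmem _ hsmem
        _ ≤ L * (1/n) := by
            apply mul_le_mul_of_nonneg_left _ hL
            rw [abs_of_nonneg (by linarith [hs.2])]
            linarith [hs.1, hdiff]
        _ = L / n := by ring
  -- last term bound
  have hlast : ‖(t - (m:ℝ)/n) • Complex.exp (Complex.I * x ((((m:ℕ)+1:ℕ):ℝ)/n))
      - ∫ s in ((m:ℝ)/n)..t, g s‖ ≤ L / n * (t - (m:ℝ)/n) := by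
    rcases eq_or_lt_of_le hmn with hEq | hlt
    · -- m = n forces t = m/n
      have htm : t = (m:ℝ)/n := by
        have : (m:ℝ) = n := by exact_mod_cast hEq
        rw [eq_div_iff hn0.ne']
        nlinarith
      rw [← htm, sub_self, zero_smul, intervalIntegral.integral_same, sub_zero, norm_zero]
      positivity
    · have hm1n : ((m:ℝ)+1)/n ≤ 1 := by
        rw [div_le_one hn0]
        have : (m:ℝ)+1 ≤ n := by exact_mod_cast hlt
        linarith
      have htb : t ≤ ((m:ℝ)+1)/n := by
        rw [le_div_iff₀ hn0]; nlinarith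
      have hcast : ((((m:ℕ)+1:ℕ)):ℝ)/n = ((m:ℝ)+1)/n := by push_cast; ring
      rw [hcast]
      have hconst : (t - (m:ℝ)/n) • Complex.exp (Complex.I * x (((m:ℝ)+1)/n))
          = ∫ _ in ((m:ℝ)/n)..t, Complex.exp (Complex.I * x (((m:ℝ)+1)/n)) := by
        rw [intervalIntegral.integral_const]
      rw [hconst, ← intervalIntegral.integral_sub intervalIntegrable_const
        (hint _ _ (by positivity) ht1 hmnt)]
      have := intervalIntegral.norm_integral_le_of_norm_le_const
        (a := (m:ℝ)/n) (b := t) (C := L/n)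
        (f := fun s => Complex.exp (Complex.I * x (((m:ℝ)+1)/n)) - g s) ?_
      · calc _ ≤ L/n * |t - (m:ℝ)/n| := this
          _ = L/n * (t - (m:ℝ)/n) := by rw [abs_of_nonneg (by linarith)]
      · intro s hs
        rw [Set.uIoc_of_le hmnt] at hs
        have hs0 : (0:ℝ) ≤ (m:ℝ)/n := by positivity
        have hsmem : s ∈ Set.Icc (0:ℝ) 1 := ⟨le_trans hs0 hs.1.le, le_trans hs.2 ht1⟩
        have hbmem : ((m:ℝ)+1)/n ∈ Set.Icc (0:ℝ) 1 := ⟨by positivity, hm1n⟩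
        calc ‖Complex.exp (Complex.I * x (((m:ℝ)+1)/n)) - g s‖
            ≤ |x (((m:ℝ)+1)/n) - x s| := exp_I_lip _ _
          _ ≤ L * |((m:ℝ)+1)/n - s| := hx _ hbmem _ hsmem
          _ ≤ L * (1/n) := by
              apply mul_le_mul_of_nonneg_left _ hL
              have h1 : s ≤ ((m:ℝ)+1)/n := le_trans hs.2 htb
              have h2 : (m:ℝ)/n < s := hs.1
              rw [abs_of_nonneg (by linarith)]
              have : ((m:ℝ)+1)/n - (m:ℝ)/n = 1/n := by field_simp; ring
              linarith
          _ = L / n := by ring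
  -- combine
  rw [hfn, hsplit]
  have hre : (∑ k ∈ range m, ((1:ℝ)/n) • Complex.exp (Complex.I * x (((k:ℝ)+1)/n))
        + (t - (m:ℝ)/n) • Complex.exp (Complex.I * x ((((m:ℕ)+1:ℕ):ℝ)/n)))
      - ((∑ k ∈ range m, ∫ s in ((k:ℝ)/n)..(((k:ℝ)+1)/n), g s)
        + ∫ s in ((m:ℝ)/n)..t, g s)
      = (∑ k ∈ range m, (((1:ℝ)/n) • Complex.exp (Complex.I * x (((k:ℝ)+1)/n))
          - ∫ s in ((k:ℝ)/n)..(((k:ℝ)+1)/n), g s))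
        + ((t - (m:ℝ)/n) • Complex.exp (Complex.I * x ((((m:ℕ)+1:ℕ):ℝ)/n))
          - ∫ s in ((m:ℝ)/n)..t, g s) := by
    rw [Finset.sum_sub_distrib]
    ring
  rw [hre]
  calc ‖_ + _‖ ≤ _ + _ := norm_add_le _ _
    _ ≤ (∑ _k ∈ range m, L/n * (1/n)) + L/n * (t - (m:ℝ)/n) := by
        exact add_le_add (le_trans (norm_sum_le _ _) (Finset.sum_le_sum hterm)) hlast
    _ = (m:ℝ) * (L/n * (1/n)) + L/n * (t - (m:ℝ)/n) := by
        rw [Finset.sum_const, Finset.card_range, nsmul_eq_mul]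
    _ = L/n * t := by field_simp; ring
    _ ≤ L/n * 1 := by
        apply mul_le_mul_of_nonneg_left ht1 (by positivity)
    _ = L/n := mul_one _
end

section
/- Let (α_n) be a sequence in (0, π] with α_n → 0 and n·α_n² → ∞. For each n, let U_{1,n} be uniform on S¹ and U_{j,n} = exp(iΘ_{j,n})U_{j-1,n} with Θ_{j,n} iid uniform on [-α_n, α_n]. Then for each fixed t ∈ [0,1], E[‖(1/n)X^n_t‖²] → 0, where X^n_t = Σ_{j=1}^{⌊nt⌋} U_{j,n} + (nt - ⌊nt⌋)U_{⌊nt⌋+1,n}. -/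
open MeasureTheory ProbabilityTheory Set Finset Filter

/-- The linearly interpolated path
`X^n_t = Σ_{j=1}^{⌊nt⌋} U_j + (nt - ⌊nt⌋) U_{⌊nt⌋+1}` built from the walk. -/
noncomputable def interpX (Θ : ℕ → Ω → ℝ) (n : ℕ) (t : ℝ) (ω : Ω) : ℂ :=
  ∑ j ∈ Finset.Icc 1 ⌊(n : ℝ) * t⌋₊, walkU Θ j ω +
    (((n : ℝ) * t - ⌊(n : ℝ) * t⌋₊ : ℝ) : ℂ) * walkU Θ (⌊(n : ℝ) * t⌋₊ + 1) ω

section AuxLemmas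

set_option linter.unusedSectionVars false

variable {Ω : Type*} [MeasureSpace Ω] {P : Measure Ω} [IsProbabilityMeasure P]

lemma integrable_of_bdd' {f : Ω → ℝ} (hf : Measurable f) {C : ℝ} (h : ∀ ω, |f ω| ≤ C) :
    Integrable f P :=
  (integrable_const C).mono' hf.aestronglyMeasurable (ae_of_all _ fun ω => by
    simpa using h ω)

lemma integral_cos_unif {a : ℝ} (ha : 0 < a) :
    ∫ x, Real.cos x ∂(unifOn (Set.Icc (-a) a)) = Real.sin a / a := by
  rw [unifOn, integral_smul_measure, Real.volume_Icc,
    MeasureTheory.integral_Icc_eq_integral_Ioc,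
    ← intervalIntegral.integral_of_le (by linarith : -a ≤ a), integral_cos,
    ENNReal.toReal_inv, ENNReal.toReal_ofReal (by linarith), Real.sin_neg]
  field_simp
  have h2 : (1:ℝ) - -1 ≠ 0 := by norm_num
  rw [smul_eq_mul, one_div, mul_inv,
    show a * ((a⁻¹ * (1 - -1)⁻¹) * ((1 - -1) * Real.sin a))
      = (a * a⁻¹) * ((1 - -1)⁻¹ * (1 - -1)) * Real.sin a by ring,
    mul_inv_cancel₀ ha.ne', inv_mul_cancel₀ h2]
  ring

lemma integral_sin_unif {a : ℝ} (ha : 0 < a) :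
    ∫ x, Real.sin x ∂(unifOn (Set.Icc (-a) a)) = 0 := by
  rw [unifOn, integral_smul_measure, Real.volume_Icc,
    MeasureTheory.integral_Icc_eq_integral_Ioc,
    ← intervalIntegral.integral_of_le (by linarith : -a ≤ a), integral_sin, Real.cos_neg]
  simp

lemma integral_comp_map {X : Ω → ℝ} (hX : Measurable X) {ν : Measure ℝ}
    (hmap : Measure.map X P = ν) {f : ℝ → ℝ} (hf : Measurable f) :
    ∫ ω, f (X ω) ∂P = ∫ x, f x ∂ν := by
  rw [← hmap, integral_map hX.aemeasurable hf.aestronglyMeasurable]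

lemma cos_sin_sum_integral (Θ : ℕ → Ω → ℝ) (hmeas : ∀ i, Measurable (Θ i))
    (hindep : iIndepFun Θ P)
    (c : ℝ) (hc : ∀ i, 1 ≤ i → (∫ ω, Real.cos (Θ i ω) ∂P) = c ∧ (∫ ω, Real.sin (Θ i ω) ∂P) = 0)
    (a : ℕ) (ha : 1 ≤ a) (d : ℕ) :
    (∫ ω, Real.cos (∑ i ∈ Finset.Ico a (a+d), Θ i ω) ∂P) = c ^ d ∧
    (∫ ω, Real.sin (∑ i ∈ Finset.Ico a (a+d), Θ i ω) ∂P) = 0 := by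
  induction d with
  | zero => simp
  | succ d ih =>
    have hS : Measurable (fun ω => ∑ i ∈ Finset.Ico a (a+d), Θ i ω) :=
      Finset.measurable_sum _ (fun i _ => hmeas i)
    have hTm : Measurable (Θ (a+d)) := hmeas (a+d)
    have hsplit : ∀ ω, ∑ i ∈ Finset.Ico a (a+(d+1)), Θ i ω
        = (∑ i ∈ Finset.Ico a (a+d), Θ i ω) + Θ (a+d) ω := by
      intro ω
      have : a + (d+1) = (a+d) + 1 := by omega
      rw [this, Finset.sum_Ico_succ_top (Nat.le_add_right a d)]
    have hind : IndepFun (∑ i ∈ Finset.Ico a (a+d), Θ i) (Θ (a+d)) P :=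
      hindep.indepFun_finsetSum_of_notMem hmeas (by simp)
    have hsum_eq : (∑ i ∈ Finset.Ico a (a+d), Θ i)
        = fun ω => ∑ i ∈ Finset.Ico a (a+d), Θ i ω := by
      funext ω; simp [Finset.sum_apply]
    rw [hsum_eq] at hind
    have hcc := (hind.comp Real.measurable_cos Real.measurable_cos).integral_fun_mul_eq_mul_integral
      (Real.measurable_cos.comp hS).aestronglyMeasurable
      (Real.measurable_cos.comp hTm).aestronglyMeasurable
    have hss := (hind.comp Real.measurable_sin Real.measurable_sin).integral_fun_mul_eq_mul_integral
      (Real.measurable_sin.comp hS).aestronglyMeasurable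
      (Real.measurable_sin.comp hTm).aestronglyMeasurable
    have hsc := (hind.comp Real.measurable_sin Real.measurable_cos).integral_fun_mul_eq_mul_integral
      (Real.measurable_sin.comp hS).aestronglyMeasurable
      (Real.measurable_cos.comp hTm).aestronglyMeasurable
    have hcs := (hind.comp Real.measurable_cos Real.measurable_sin).integral_fun_mul_eq_mul_integral
      (Real.measurable_cos.comp hS).aestronglyMeasurable
      (Real.measurable_sin.comp hTm).aestronglyMeasurable
    have hint : ∀ (f g : ℝ → ℝ), (∀ x, |f x| ≤ 1) → (∀ x, |g x| ≤ 1) → Measurable f →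
        Measurable g →
        Integrable (fun ω => f (∑ i ∈ Finset.Ico a (a+d), Θ i ω) * g (Θ (a+d) ω)) P := by
      intro f g hf hg hfm hgm
      refine integrable_of_bdd' ((hfm.comp hS).mul (hgm.comp hTm)) (C := 1) (fun ω => ?_)
      rw [abs_mul]
      exact mul_le_one₀ (hf _) (abs_nonneg _) (hg _)
    simp only [Function.comp_def] at hcc hss hsc hcs
    have hca := (hc (a+d) (by omega)).1
    have hsa := (hc (a+d) (by omega)).2
    constructor
    · have : (∫ ω, Real.cos (∑ i ∈ Finset.Ico a (a+(d+1)), Θ i ω) ∂P)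
          = (∫ ω, Real.cos (∑ i ∈ Finset.Ico a (a+d), Θ i ω) * Real.cos (Θ (a+d) ω)
              - Real.sin (∑ i ∈ Finset.Ico a (a+d), Θ i ω) * Real.sin (Θ (a+d) ω) ∂P) := by
        congr 1; funext ω; rw [hsplit ω, Real.cos_add]
      rw [this, integral_sub
        (hint _ _ (fun x => Real.abs_cos_le_one x) (fun x => Real.abs_cos_le_one x)
          Real.measurable_cos Real.measurable_cos)
        (hint _ _ (fun x => Real.abs_sin_le_one x) (fun x => Real.abs_sin_le_one x)
          Real.measurable_sin Real.measurable_sin)]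
      have e1 : (∫ ω, Real.cos (∑ i ∈ Finset.Ico a (a+d), Θ i ω) * Real.cos (Θ (a+d) ω) ∂P)
          = c ^ d * c := by rw [hcc]; rw [ih.1, hca]
      have e2 : (∫ ω, Real.sin (∑ i ∈ Finset.Ico a (a+d), Θ i ω) * Real.sin (Θ (a+d) ω) ∂P)
          = 0 := by rw [hss]; rw [ih.2]; ring
      rw [e1, e2, pow_succ]; ring
    · have : (∫ ω, Real.sin (∑ i ∈ Finset.Ico a (a+(d+1)), Θ i ω) ∂P)
          = (∫ ω, Real.sin (∑ i ∈ Finset.Ico a (a+d), Θ i ω) * Real.cos (Θ (a+d) ω)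
              + Real.cos (∑ i ∈ Finset.Ico a (a+d), Θ i ω) * Real.sin (Θ (a+d) ω) ∂P) := by
        congr 1; funext ω; rw [hsplit ω, Real.sin_add]
      rw [this, integral_add
        (hint _ _ (fun x => Real.abs_sin_le_one x) (fun x => Real.abs_cos_le_one x)
          Real.measurable_sin Real.measurable_cos)
        (hint _ _ (fun x => Real.abs_cos_le_one x) (fun x => Real.abs_sin_le_one x)
          Real.measurable_cos Real.measurable_sin)]
      rw [hsc, hcs, ih.1, ih.2, hsa]
      ring

end AuxLemmas

lemma norm_sq_sum_exp (F : Finset ℕ) (g : ℕ → ℝ) :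
    ‖∑ j ∈ F, Complex.exp (Complex.I * (g j : ℂ))‖ ^ 2
      = ∑ j ∈ F, ∑ k ∈ F, Real.cos (g j - g k) := by
  have key : (∑ j ∈ F, Complex.exp (Complex.I * (g j : ℂ)))
      * (starRingEnd ℂ) (∑ j ∈ F, Complex.exp (Complex.I * (g j : ℂ)))
      = ∑ j ∈ F, ∑ k ∈ F, Complex.exp (((g j - g k : ℝ) : ℂ) * Complex.I) := by
    rw [map_sum, Finset.sum_mul_sum]
    refine Finset.sum_congr rfl fun j _ => Finset.sum_congr rfl fun k _ => ?_
    rw [← Complex.exp_conj, ← Complex.exp_add]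
    congr 1
    simp only [map_mul, Complex.conj_I, Complex.conj_ofReal]
    push_cast
    ring
  have h1 : (‖∑ j ∈ F, Complex.exp (Complex.I * (g j : ℂ))‖ : ℝ) ^ 2
      = ((∑ j ∈ F, Complex.exp (Complex.I * (g j : ℂ)))
        * (starRingEnd ℂ) (∑ j ∈ F, Complex.exp (Complex.I * (g j : ℂ)))).re := by
    rw [Complex.mul_conj]
    simp [Complex.sq_norm]
  rw [h1, key, Complex.re_sum]
  refine Finset.sum_congr rfl fun j _ => ?_
  rw [Complex.re_sum]
  refine Finset.sum_congr rfl fun k _ => ?_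
  exact Complex.exp_ofReal_mul_I_re _

lemma geom_range_le {c : ℝ} (h0 : 0 ≤ c) (h1 : c < 1) (N : ℕ) :
    ∑ d ∈ Finset.range N, c ^ d ≤ 1 / (1 - c) := by
  have h1c : 0 < 1 - c := by linarith
  rw [le_div_iff₀ h1c]
  nlinarith [geom_sum_mul c N, pow_nonneg h0 N]

lemma geo_bound {c : ℝ} (h0 : 0 ≤ c) (h1 : c < 1) (j m : ℕ) :
    ∑ k ∈ Finset.Icc 1 m, c ^ ((j - k) + (k - j)) ≤ 2 / (1 - c) := by
  have hsplit := Finset.sum_filter_add_sum_filter_not (Finset.Icc 1 m) (· ≤ j)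
    (fun k => c ^ ((j - k) + (k - j)))
  rw [← hsplit]
  have hb1 : ∑ k ∈ (Finset.Icc 1 m).filter (· ≤ j), c ^ ((j - k) + (k - j))
      ≤ 1 / (1 - c) := by
    have he : ∀ k ∈ (Finset.Icc 1 m).filter (· ≤ j),
        c ^ ((j - k) + (k - j)) = c ^ (j - k) := by
      intro k hk
      simp only [Finset.mem_filter] at hk
      congr 1
      omega
    have himg : ∑ d ∈ ((Finset.Icc 1 m).filter (· ≤ j)).image (fun k => j - k), c ^ d
        = ∑ k ∈ (Finset.Icc 1 m).filter (· ≤ j), c ^ (j - k) :=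
      Finset.sum_image (by
        intro x hx y hy hxy
        simp only [Finset.coe_filter, Finset.mem_filter, Finset.mem_Icc, Set.mem_setOf_eq,
          Finset.mem_coe] at hx hy
        have hxy' : j - x = j - y := hxy
        omega)
    rw [Finset.sum_congr rfl he, ← himg]
    refine le_trans (Finset.sum_le_sum_of_subset_of_nonneg ?_
      (fun i _ _ => pow_nonneg h0 i)) (geom_range_le h0 h1 (j+1))
    intro d hd
    simp only [Finset.mem_image, Finset.mem_filter, Finset.mem_Icc] at hd
    obtain ⟨k, hk, rfl⟩ := hd
    simp only [Finset.mem_range]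
    omega
  have hb2 : ∑ k ∈ (Finset.Icc 1 m).filter (fun k => ¬ k ≤ j), c ^ ((j - k) + (k - j))
      ≤ 1 / (1 - c) := by
    have he : ∀ k ∈ (Finset.Icc 1 m).filter (fun k => ¬ k ≤ j),
        c ^ ((j - k) + (k - j)) = c ^ (k - j) := by
      intro k hk
      simp only [Finset.mem_filter] at hk
      congr 1
      omega
    have himg : ∑ d ∈ ((Finset.Icc 1 m).filter (fun k => ¬ k ≤ j)).image (fun k => k - j), c ^ d
        = ∑ k ∈ (Finset.Icc 1 m).filter (fun k => ¬ k ≤ j), c ^ (k - j) :=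
      Finset.sum_image (by
        intro x hx y hy hxy
        simp only [Finset.coe_filter, Finset.mem_filter, Finset.mem_Icc, Set.mem_setOf_eq,
          Finset.mem_coe] at hx hy
        have hxy' : x - j = y - j := hxy
        omega)
    rw [Finset.sum_congr rfl he, ← himg]
    refine le_trans (Finset.sum_le_sum_of_subset_of_nonneg ?_
      (fun i _ _ => pow_nonneg h0 i)) (geom_range_le h0 h1 (m+1))
    intro d hd
    simp only [Finset.mem_image, Finset.mem_filter, Finset.mem_Icc] at hd
    obtain ⟨k, hk, rfl⟩ := hd
    simp only [Finset.mem_range]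
    omega
  have h2 : (2 : ℝ) / (1 - c) = 1 / (1 - c) + 1 / (1 - c) := by ring
  rw [h2]
  exact add_le_add hb1 hb2

/-- Triangular array of circle walks with angles uniform on `[-α_n, α_n]`, where
`α_n → 0` and `n·α_n² → ∞`: for each fixed `t ∈ [0,1]`, `E[‖(1/n)X^n_t‖²] → 0`. -/
theorem stmt_12 {Ω : Type*} [MeasureSpace Ω] (P : Measure Ω) [IsProbabilityMeasure P]
    (α : ℕ → ℝ) (hα : ∀ n, 0 < α n ∧ α n ≤ Real.pi)
    (hα0 : Tendsto α atTop (nhds 0))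
    (hfast : Tendsto (fun n : ℕ => (n : ℝ) * α n ^ 2) atTop atTop)
    (Θ : ℕ → ℕ → Ω → ℝ) (hmeas : ∀ n i, Measurable (Θ n i))
    (hindep : ∀ n, iIndepFun (Θ n) P)
    (h0 : ∀ n, Measure.map (Θ n 0) P = unifOn (Ico 0 (2 * Real.pi)))
    (hunif : ∀ n, ∀ i ≥ 1, Measure.map (Θ n i) P = unifOn (Icc (-(α n)) (α n)))
    (t : ℝ) (ht : t ∈ Set.Icc (0 : ℝ) 1) :
    Tendsto (fun n : ℕ => ∫ ω, ‖(1 / (n : ℂ)) * interpX (Θ n) n t ω‖ ^ 2 ∂P)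
      atTop (nhds 0) := by
  classical
  set s : ℕ → ℝ := fun n => Real.sin (α n) / α n with hs_def
  have hαpos : ∀ n, 0 < α n := fun n => (hα n).1
  have hs0 : ∀ n, 0 ≤ s n := fun n =>
    div_nonneg (Real.sin_nonneg_of_nonneg_of_le_pi (hαpos n).le (hα n).2) (hαpos n).le
  have hs1 : ∀ n, s n < 1 := fun n => (div_lt_one (hαpos n)).2 (Real.sin_lt (hαpos n))
  have h1s : ∀ n, 0 < 1 - s n := fun n => by linarith [hs1 n]
  -- base expectations
  have hbase : ∀ n, ∀ i, 1 ≤ i →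
      (∫ ω, Real.cos (Θ n i ω) ∂P) = s n ∧ (∫ ω, Real.sin (Θ n i ω) ∂P) = 0 := by
    intro n i hi
    constructor
    · rw [integral_comp_map (hmeas n i) (hunif n i hi) Real.measurable_cos,
        integral_cos_unif (hαpos n)]
    · rw [integral_comp_map (hmeas n i) (hunif n i hi) Real.measurable_sin,
        integral_sin_unif (hαpos n)]
  -- pairwise expectations
  have hpair : ∀ n, ∀ j k : ℕ, 1 ≤ j → 1 ≤ k →
      (∫ ω, Real.cos ((∑ i ∈ Finset.range j, Θ n i ω) - ∑ i ∈ Finset.range k, Θ n i ω) ∂P)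
        = s n ^ ((j - k) + (k - j)) := by
    intro n j k hj hk
    rcases le_or_gt k j with h | h
    · have heq : (∫ ω, Real.cos ((∑ i ∈ Finset.range j, Θ n i ω)
            - ∑ i ∈ Finset.range k, Θ n i ω) ∂P)
          = ∫ ω, Real.cos (∑ i ∈ Finset.Ico k (k + (j - k)), Θ n i ω) ∂P := by
        congr 1; funext ω
        rw [Nat.add_sub_cancel' h, Finset.sum_Ico_eq_sub _ h]
      rw [heq, (cos_sin_sum_integral (Θ n) (hmeas n) (hindep n) (s n) (hbase n) k hk (j - k)).1]
      congr 1
      omega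
    · have heq : (∫ ω, Real.cos ((∑ i ∈ Finset.range j, Θ n i ω)
            - ∑ i ∈ Finset.range k, Θ n i ω) ∂P)
          = ∫ ω, Real.cos (∑ i ∈ Finset.Ico j (j + (k - j)), Θ n i ω) ∂P := by
        congr 1; funext ω
        rw [← Real.cos_neg, neg_sub, Nat.add_sub_cancel' h.le, Finset.sum_Ico_eq_sub _ h.le]
      rw [heq, (cos_sin_sum_integral (Θ n) (hmeas n) (hindep n) (s n) (hbase n) j hj (k - j)).1]
      congr 1
      omega
  -- measurability of the walk
  have hWmeas : ∀ n j, Measurable (walkU (Θ n) j) := by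
    intro n j
    exact Complex.measurable_exp.comp
      (measurable_const.mul
        (Complex.measurable_ofReal.comp (Finset.measurable_sum _ fun i _ => hmeas n i)))
  have hU1 : ∀ n j ω, ‖walkU (Θ n) j ω‖ = 1 := by
    intro n j ω
    rw [walkU, mul_comm, Complex.norm_exp_ofReal_mul_I]
  -- value of E ‖A‖²
  have hAval : ∀ n : ℕ,
      (∫ ω, ‖∑ j ∈ Finset.Icc 1 (⌊(n:ℝ)*t⌋₊), walkU (Θ n) j ω‖^2 ∂P)
        = ∑ j ∈ Finset.Icc 1 (⌊(n:ℝ)*t⌋₊), ∑ k ∈ Finset.Icc 1 (⌊(n:ℝ)*t⌋₊),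
            s n ^ ((j - k) + (k - j)) := by
    intro n
    have hpt : (fun ω => ‖∑ j ∈ Finset.Icc 1 (⌊(n:ℝ)*t⌋₊), walkU (Θ n) j ω‖^2)
        = fun ω => ∑ j ∈ Finset.Icc 1 (⌊(n:ℝ)*t⌋₊), ∑ k ∈ Finset.Icc 1 (⌊(n:ℝ)*t⌋₊),
            Real.cos ((∑ i ∈ Finset.range j, Θ n i ω) - ∑ i ∈ Finset.range k, Θ n i ω) := by
      funext ω
      simpa only [walkU] using
        norm_sq_sum_exp (Finset.Icc 1 (⌊(n:ℝ)*t⌋₊)) (fun j => ∑ i ∈ Finset.range j, Θ n i ω)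
    have hci : ∀ j k : ℕ, Integrable (fun ω =>
        Real.cos ((∑ i ∈ Finset.range j, Θ n i ω) - ∑ i ∈ Finset.range k, Θ n i ω)) P := by
      intro j k
      exact integrable_of_bdd' (Real.measurable_cos.comp
        ((Finset.measurable_sum _ fun i _ => hmeas n i).sub
          (Finset.measurable_sum _ fun i _ => hmeas n i)))
        (C := 1) (fun ω => Real.abs_cos_le_one _)
    rw [hpt, integral_finset_sum _ (fun j _ => integrable_finset_sum _ (fun k _ => hci j k))]
    refine Finset.sum_congr rfl fun j hj => ?_
    rw [integral_finset_sum _ (fun k _ => hci j k)]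
    refine Finset.sum_congr rfl fun k hk => ?_
    exact hpair n j k (Finset.mem_Icc.1 hj).1 (Finset.mem_Icc.1 hk).1
  -- bound on E ‖A‖²
  have hkey : ∀ n : ℕ,
      (∫ ω, ‖∑ j ∈ Finset.Icc 1 (⌊(n:ℝ)*t⌋₊), walkU (Θ n) j ω‖^2 ∂P)
        ≤ 2 * (⌊(n:ℝ)*t⌋₊ : ℝ) / (1 - s n) := by
    intro n
    rw [hAval n]
    calc ∑ j ∈ Finset.Icc 1 (⌊(n:ℝ)*t⌋₊), ∑ k ∈ Finset.Icc 1 (⌊(n:ℝ)*t⌋₊),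
          s n ^ ((j - k) + (k - j))
        ≤ ∑ _j ∈ Finset.Icc 1 (⌊(n:ℝ)*t⌋₊), 2 / (1 - s n) :=
          Finset.sum_le_sum (fun j _ => geo_bound (hs0 n) (hs1 n) j _)
      _ = (⌊(n:ℝ)*t⌋₊ : ℝ) * (2 / (1 - s n)) := by
          rw [Finset.sum_const, Nat.card_Icc, nsmul_eq_mul]
          norm_num
      _ = 2 * (⌊(n:ℝ)*t⌋₊ : ℝ) / (1 - s n) := by ring
  -- main per-n estimate
  have hmain : ∀ n : ℕ, 1 ≤ n →
      (∫ ω, ‖(1 / (n : ℂ)) * interpX (Θ n) n t ω‖ ^ 2 ∂P)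
        ≤ 4 / ((n:ℝ) * (1 - s n)) + 2 / (n:ℝ)^2 := by
    intro n hn
    have hnpos : (0:ℝ) < n := by exact_mod_cast hn
    have hnt0 : 0 ≤ (n:ℝ) * t := mul_nonneg (Nat.cast_nonneg n) ht.1
    have hMn : ((⌊(n:ℝ)*t⌋₊ : ℝ)) ≤ (n:ℝ) := by
      have h1 : (n:ℝ) * t ≤ n := by nlinarith [ht.2, Nat.cast_nonneg (α := ℝ) n]
      exact le_trans (Nat.floor_le hnt0) h1
    -- pointwise bound on the interpolated path
    have hA_meas : Measurable (fun ω => ∑ j ∈ Finset.Icc 1 (⌊(n:ℝ)*t⌋₊), walkU (Θ n) j ω) :=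
      Finset.measurable_sum _ (fun j _ => hWmeas n j)
    have hA_bdd : ∀ ω, ‖∑ j ∈ Finset.Icc 1 (⌊(n:ℝ)*t⌋₊), walkU (Θ n) j ω‖
        ≤ (⌊(n:ℝ)*t⌋₊ : ℝ) := by
      intro ω
      calc ‖∑ j ∈ Finset.Icc 1 (⌊(n:ℝ)*t⌋₊), walkU (Θ n) j ω‖
          ≤ ∑ j ∈ Finset.Icc 1 (⌊(n:ℝ)*t⌋₊), ‖walkU (Θ n) j ω‖ := norm_sum_le _ _
        _ = ∑ _j ∈ Finset.Icc 1 (⌊(n:ℝ)*t⌋₊), (1:ℝ) :=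
            Finset.sum_congr rfl (fun j _ => hU1 n j ω)
        _ = (⌊(n:ℝ)*t⌋₊ : ℝ) := by
            rw [Finset.sum_const, Nat.card_Icc, nsmul_eq_mul]
            norm_num
    have hintA2 : Integrable
        (fun ω => ‖∑ j ∈ Finset.Icc 1 (⌊(n:ℝ)*t⌋₊), walkU (Θ n) j ω‖^2) P := by
      refine integrable_of_bdd' (hA_meas.norm.pow_const 2)
        (C := ((⌊(n:ℝ)*t⌋₊ : ℝ))^2) (fun ω => ?_)
      rw [abs_of_nonneg (by positivity)]
      exact pow_le_pow_left₀ (norm_nonneg _) (hA_bdd ω) 2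
    have hptX : ∀ ω, ‖interpX (Θ n) n t ω‖^2
        ≤ 2 * ‖∑ j ∈ Finset.Icc 1 (⌊(n:ℝ)*t⌋₊), walkU (Θ n) j ω‖^2 + 2 := by
      intro ω
      have hr0 : 0 ≤ (n:ℝ)*t - (⌊(n:ℝ)*t⌋₊ : ℝ) := by
        have := Nat.floor_le hnt0
        linarith
      have hr1 : (n:ℝ)*t - (⌊(n:ℝ)*t⌋₊ : ℝ) ≤ 1 := by
        have := Nat.lt_floor_add_one ((n:ℝ)*t)
        linarith
      have h1 : ‖interpX (Θ n) n t ω‖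
          ≤ ‖∑ j ∈ Finset.Icc 1 (⌊(n:ℝ)*t⌋₊), walkU (Θ n) j ω‖ + 1 := by
        rw [interpX]
        refine le_trans (norm_add_le _ _) (add_le_add_right ?_ _)
        rw [norm_mul, hU1 n _ ω, mul_one, Complex.norm_real, Real.norm_eq_abs,
          abs_of_nonneg hr0]
        exact hr1
      nlinarith [norm_nonneg (interpX (Θ n) n t ω),
        norm_nonneg (∑ j ∈ Finset.Icc 1 (⌊(n:ℝ)*t⌋₊), walkU (Θ n) j ω),
        sq_nonneg (‖∑ j ∈ Finset.Icc 1 (⌊(n:ℝ)*t⌋₊), walkU (Θ n) j ω‖ - 1),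
        mul_self_le_mul_self (norm_nonneg (interpX (Θ n) n t ω)) h1]
    -- pull out the 1/n factor
    have hscale : (∫ ω, ‖(1 / (n : ℂ)) * interpX (Θ n) n t ω‖ ^ 2 ∂P)
        = ((n:ℝ)^2)⁻¹ * ∫ ω, ‖interpX (Θ n) n t ω‖ ^ 2 ∂P := by
      have : (fun ω => ‖(1 / (n : ℂ)) * interpX (Θ n) n t ω‖ ^ 2)
          = fun ω => ((n:ℝ)^2)⁻¹ * ‖interpX (Θ n) n t ω‖ ^ 2 := by
        funext ω
        rw [norm_mul, mul_pow]
        congr 1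
        rw [norm_div, norm_one, Complex.norm_natCast]
        rw [div_pow, one_pow, one_div]
      rw [this, integral_const_mul]
    rw [hscale]
    have hIX : (∫ ω, ‖interpX (Θ n) n t ω‖ ^ 2 ∂P)
        ≤ 2 * (2 * (⌊(n:ℝ)*t⌋₊ : ℝ) / (1 - s n)) + 2 := by
      have hle : (∫ ω, ‖interpX (Θ n) n t ω‖ ^ 2 ∂P)
          ≤ ∫ ω, 2 * ‖∑ j ∈ Finset.Icc 1 (⌊(n:ℝ)*t⌋₊), walkU (Θ n) j ω‖^2 + 2 ∂P := by
        refine integral_mono_of_nonneg (ae_of_all _ fun ω => sq_nonneg _)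
          ((hintA2.const_mul 2).add (integrable_const 2)) (ae_of_all _ hptX)
      refine le_trans hle ?_
      rw [integral_add (hintA2.const_mul 2) (integrable_const 2), integral_const_mul,
        integral_const]
      simp only [probReal_univ, measure_univ, ENNReal.toReal_one, smul_eq_mul, one_mul]
      have := hkey n
      linarith
    have hIX2 : (∫ ω, ‖interpX (Θ n) n t ω‖ ^ 2 ∂P)
        ≤ 4 * (n:ℝ) / (1 - s n) + 2 := by
      refine le_trans hIX ?_
      have e4 : 2 * (2 * (⌊(n:ℝ)*t⌋₊ : ℝ) / (1 - s n))
          = 4 * (⌊(n:ℝ)*t⌋₊ : ℝ) / (1 - s n) := by ring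
      have h1sn := h1s n
      have : 4 * (⌊(n:ℝ)*t⌋₊ : ℝ) / (1 - s n) ≤ 4 * (n:ℝ) / (1 - s n) := by gcongr
      linarith
    calc ((n:ℝ)^2)⁻¹ * ∫ ω, ‖interpX (Θ n) n t ω‖ ^ 2 ∂P
        ≤ ((n:ℝ)^2)⁻¹ * (4 * (n:ℝ) / (1 - s n) + 2) := by
          refine mul_le_mul_of_nonneg_left hIX2 (by positivity)
      _ = 4 / ((n:ℝ) * (1 - s n)) + 2 / (n:ℝ)^2 := by
          have hne : (n:ℝ) ≠ 0 := ne_of_gt hnpos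
          have hcalc : ∀ u : ℝ, u ≠ 0 →
              ((n:ℝ)^2)⁻¹ * (4 * (n:ℝ) / u + 2) = 4 / ((n:ℝ)*u) + 2/(n:ℝ)^2 := by
            intro u hu
            field_simp
          exact hcalc (1 - s n) (ne_of_gt (h1s n))
  -- the bound tends to zero
  have hslow : ∀ᶠ n : ℕ in atTop, (11/96 : ℝ) * ((n:ℝ) * α n ^ 2) ≤ (n:ℝ) * (1 - s n) := by
    filter_upwards [hα0.eventually (gt_mem_nhds one_pos)] with n hn1
    have hb := Real.sin_bound (x := α n) (by rw [abs_of_pos (hαpos n)]; linarith)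
    rw [abs_of_pos (hαpos n)] at hb
    have hsin : Real.sin (α n) ≤ α n - (11/96) * α n^3 := by
      have h2 := (abs_le.1 hb).2
      nlinarith [pow_pos (hαpos n) 3, pow_pos (hαpos n) 4, hαpos n, hn1]
    have h1 : (11/96:ℝ) * α n^2 ≤ 1 - s n := by
      have hd : Real.sin (α n) / α n ≤ 1 - (11/96) * α n^2 := by
        rw [div_le_iff₀ (hαpos n)]
        nlinarith [hsin]
      simp only [hs_def]
      linarith
    calc (11/96:ℝ) * ((n:ℝ) * α n ^ 2) = (n:ℝ) * ((11/96) * α n^2) := by ring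
      _ ≤ (n:ℝ) * (1 - s n) := mul_le_mul_of_nonneg_left h1 (Nat.cast_nonneg n)
  have hdiv : Tendsto (fun n : ℕ => (n:ℝ) * (1 - s n)) atTop atTop :=
    tendsto_atTop_mono' atTop hslow (hfast.const_mul_atTop (by norm_num))
  have hB : Tendsto (fun n : ℕ => 4 / ((n:ℝ) * (1 - s n)) + 2 / (n:ℝ)^2) atTop (nhds 0) := by
    have h1 : Tendsto (fun n : ℕ => 4 / ((n:ℝ) * (1 - s n))) atTop (nhds 0) := by
      simpa using
        (tendsto_inv_atTop_zero.comp hdiv).const_mul (4:ℝ) |>.congr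
          (fun n => by simp [div_eq_mul_inv])
    have h2 : Tendsto (fun n : ℕ => 2 / (n:ℝ)^2) atTop (nhds 0) := by
      have hp : Tendsto (fun n : ℕ => ((n:ℝ))^2) atTop atTop :=
        (tendsto_pow_atTop (two_ne_zero)).comp tendsto_natCast_atTop_atTop
      simpa using
        (tendsto_inv_atTop_zero.comp hp).const_mul (2:ℝ) |>.congr
          (fun n => by simp [div_eq_mul_inv])
    simpa using h1.add h2
  refine tendsto_of_tendsto_of_tendsto_of_le_of_le' tendsto_const_nhds hB ?_ ?_
  · exact Eventually.of_forall fun n => integral_nonneg fun ω => sq_nonneg _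
  · filter_upwards [eventually_ge_atTop 1] with n hn
    exact hmain n hn
end

section
/- With the same triangular-array setup but assuming n·α_n² → 0, for each fixed t ∈ [0,1] one has E[‖(1/n)X^n_t - t·U_{1,n}‖²] → 0. Consequently the rescaled path converges (in finite-dimensional distributions) to the straight line t ↦ tU with U uniform on S¹. -/
open MeasureTheory ProbabilityTheory Set Finset Filter BoundedContinuousFunction

/-- The uniform (Haar) distribution on the unit circle `S¹ ⊂ ℂ`. -/
noncomputable def circleUnif : Measure ℂ :=
  Measure.map (fun θ : ℝ => Complex.exp (Complex.I * θ)) (unifOn (Ico 0 (2 * Real.pi)))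

lemma norm_exp_I_mul_sub_one (x : ℝ) : ‖Complex.exp (Complex.I * x) - 1‖ ≤ |x| := by
  have h1 : ‖Complex.exp (Complex.I * x) - 1‖ ^ 2 = 2 - 2 * Real.cos x := by
    rw [mul_comm, Complex.sq_norm, Complex.normSq_apply]
    simp [Complex.exp_ofReal_mul_I_re, Complex.exp_ofReal_mul_I_im]
    nlinarith [Real.sin_sq_add_cos_sq x]
  have h2 : 2 - 2 * Real.cos x ≤ x ^ 2 := by
    nlinarith [Real.one_sub_sq_div_two_le_cos (x := x)]
  have hx : ‖Complex.exp (Complex.I * x) - 1‖ ^ 2 ≤ |x| ^ 2 := by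
    rw [sq_abs]; exact h1.trans_le h2
  nlinarith [norm_nonneg (Complex.exp (Complex.I * x) - 1), abs_nonneg x]

lemma ae_mem_Icc {Ω : Type*} [MeasurableSpace Ω] {P : Measure Ω} {f : Ω → ℝ} {a : ℝ}
    (hf : Measurable f) (hmap : Measure.map f P = unifOn (Icc (-a) a)) :
    ∀ᵐ ω ∂P, |f ω| ≤ a := by
  have h0 : P (f ⁻¹' (Icc (-a) a)ᶜ) = 0 := by
    rw [← Measure.map_apply hf measurableSet_Icc.compl, hmap]
    simp [unifOn, Measure.restrict_apply measurableSet_Icc.compl]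
  rw [ae_iff]
  convert h0 using 2
  ext ω
  simp [abs_le, not_and_or, Set.mem_Icc]

lemma integral_unif_zero {Ω : Type*} [MeasurableSpace Ω] {P : Measure Ω} {f : Ω → ℝ} {a : ℝ}
    (ha : -a ≤ a) (hf : Measurable f) (hmap : Measure.map f P = unifOn (Icc (-a) a)) :
    ∫ ω, f ω ∂P = 0 := by
  have h1 : ∫ ω, f ω ∂P = ∫ x, x ∂(Measure.map f P) :=
    (integral_map hf.aemeasurable aestronglyMeasurable_id).symm
  rw [h1, hmap]
  unfold unifOn
  rw [integral_smul_measure]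
  have h2 : ∫ x in Icc (-a) a, x = 0 := by
    rw [MeasureTheory.integral_Icc_eq_integral_Ioc, ← intervalIntegral.integral_of_le ha]
    rw [integral_id]
    ring
  simp [h2]

lemma part1_bound {Ω : Type*} [MeasurableSpace Ω] (P : Measure Ω) [IsProbabilityMeasure P]
    {a : ℝ} (ha : 0 < a) (Θ : ℕ → Ω → ℝ) (hm : ∀ i, Measurable (Θ i))
    (hind : iIndepFun Θ P)
    (hunif : ∀ i ≥ 1, Measure.map (Θ i) P = unifOn (Icc (-a) a))
    {t : ℝ} (ht0 : 0 ≤ t) (ht1 : t ≤ 1) {n : ℕ} (hn : 1 ≤ n) :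
    ∫ ω, ‖(1 / (n : ℂ)) * interpX Θ n t ω - (t : ℂ) * walkU Θ 1 ω‖ ^ 2 ∂P
      ≤ 8 * n * a ^ 2 := by
  set m : ℕ := ⌊(n : ℝ) * t⌋₊ with hm_def
  set f : ℝ := (n : ℝ) * t - m with hf_def
  have hnt0 : (0:ℝ) ≤ (n : ℝ) * t := by positivity
  have hf0 : 0 ≤ f := sub_nonneg.2 (Nat.floor_le hnt0)
  have hf1 : f ≤ 1 := by
    have := Nat.lt_floor_add_one ((n : ℝ) * t)
    simp only [hf_def]; linarith
  have hmn : m ≤ n := by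
    have : ((n : ℝ) * t) ≤ (n : ℕ) := by
      calc (n : ℝ) * t ≤ (n:ℝ) * 1 := by nlinarith
      _ = (n:ℝ) := by ring
    calc m ≤ ⌊((n:ℕ) : ℝ)⌋₊ := Nat.floor_le_floor this
    _ = n := Nat.floor_natCast n
  have hn0 : ((n:ℝ)) ≠ 0 := by positivity
  have hnc0 : ((n:ℂ)) ≠ 0 := by exact_mod_cast Nat.cast_ne_zero.2 (by omega)
  set T : ℕ → Ω → ℝ := fun j ω => ∑ i ∈ Finset.Ico 1 j, Θ i ω with hT_def
  -- step A: algebraic identity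
  have hA : ∀ ω, (1 / (n : ℂ)) * interpX Θ n t ω - (t : ℂ) * walkU Θ 1 ω
      = (1 / (n : ℂ)) * ((∑ j ∈ Finset.Icc 1 m, (walkU Θ j ω - walkU Θ 1 ω))
          + (f : ℂ) * (walkU Θ (m+1) ω - walkU Θ 1 ω)) := by
    intro ω
    have hsum : ∑ j ∈ Finset.Icc 1 m, (walkU Θ j ω - walkU Θ 1 ω)
        = (∑ j ∈ Finset.Icc 1 m, walkU Θ j ω) - (m : ℂ) * walkU Θ 1 ω := by
      rw [Finset.sum_sub_distrib, Finset.sum_const, Nat.card_Icc]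
      simp [nsmul_eq_mul]
    have hc : ((m:ℂ) + (f:ℂ)) = (n:ℂ) * (t:ℂ) := by
      have : ((m:ℝ) + f) = (n:ℝ) * t := by simp [hf_def]
      exact_mod_cast congrArg Complex.ofReal this
    rw [interpX, hsum]
    simp only [← hm_def]
    field_simp
    linear_combination walkU Θ 1 ω * hc
  -- walkU difference bound
  have hUdiff : ∀ ω, ∀ j, 1 ≤ j → ‖walkU Θ j ω - walkU Θ 1 ω‖ ≤ |T j ω| := by
    intro ω j hj
    have hS : (∑ i ∈ Finset.range j, Θ i ω) = Θ 0 ω + T j ω := by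
      rw [Finset.range_eq_Ico, Finset.sum_eq_sum_Ico_succ_bot (by omega)]
    have e1 : walkU Θ j ω = walkU Θ 1 ω * Complex.exp (Complex.I * (T j ω : ℝ)) := by
      unfold walkU
      rw [hS, Finset.sum_range_one]
      push_cast
      rw [mul_add, Complex.exp_add]
    have e2 : ‖walkU Θ 1 ω‖ = 1 := by
      unfold walkU; rw [mul_comm]; exact Complex.norm_exp_ofReal_mul_I _
    have e3 : walkU Θ j ω - walkU Θ 1 ω
        = walkU Θ 1 ω * (Complex.exp (Complex.I * (T j ω : ℝ)) - 1) := by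
      rw [e1]; ring
    rw [e3, norm_mul, e2, one_mul]
    exact norm_exp_I_mul_sub_one _
  -- pointwise norm bound
  have hB : ∀ ω, ‖(1 / (n : ℂ)) * interpX Θ n t ω - (t : ℂ) * walkU Θ 1 ω‖
      ≤ (1 / (n : ℝ)) * ∑ j ∈ Finset.Icc 1 (m+1), |T j ω| := by
    intro ω
    rw [hA ω, norm_mul]
    have h1n : ‖(1 / (n : ℂ))‖ = 1 / (n : ℝ) := by simp
    rw [h1n]
    refine mul_le_mul_of_nonneg_left ?_ (by positivity)
    have hfterm : ‖(f : ℂ) * (walkU Θ (m+1) ω - walkU Θ 1 ω)‖ ≤ |T (m+1) ω| := by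
      rw [norm_mul, Complex.norm_real, Real.norm_eq_abs]
      have h1 := hUdiff ω (m+1) (by omega)
      have h2 : |f| ≤ 1 := by rw [abs_of_nonneg hf0]; exact hf1
      nlinarith [abs_nonneg (T (m+1) ω), abs_nonneg f,
        norm_nonneg (walkU Θ (m+1) ω - walkU Θ 1 ω)]
    calc ‖(∑ j ∈ Finset.Icc 1 m, (walkU Θ j ω - walkU Θ 1 ω))
          + (f : ℂ) * (walkU Θ (m+1) ω - walkU Θ 1 ω)‖
        ≤ ‖∑ j ∈ Finset.Icc 1 m, (walkU Θ j ω - walkU Θ 1 ω)‖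
          + ‖(f : ℂ) * (walkU Θ (m+1) ω - walkU Θ 1 ω)‖ := norm_add_le _ _
      _ ≤ (∑ j ∈ Finset.Icc 1 m, |T j ω|) + |T (m+1) ω| := by
          refine add_le_add ((norm_sum_le _ _).trans (Finset.sum_le_sum fun j hj =>
            hUdiff ω j (Finset.mem_Icc.1 hj).1)) hfterm
      _ = ∑ j ∈ Finset.Icc 1 (m+1), |T j ω| := (Finset.sum_Icc_succ_top (by omega) _).symm
  -- squared bound
  have hB2 : ∀ ω, ‖(1 / (n : ℂ)) * interpX Θ n t ω - (t : ℂ) * walkU Θ 1 ω‖ ^ 2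
      ≤ ((m : ℝ) + 1) / (n : ℝ) ^ 2 * ∑ j ∈ Finset.Icc 1 (m+1), (T j ω) ^ 2 := by
    intro ω
    have h2 := pow_le_pow_left₀ (norm_nonneg _) (hB ω) 2
    refine h2.trans ?_
    rw [mul_pow]
    have hcs : (∑ j ∈ Finset.Icc 1 (m+1), |T j ω|) ^ 2
        ≤ ((Finset.Icc 1 (m+1)).card : ℝ) * ∑ j ∈ Finset.Icc 1 (m+1), |T j ω| ^ 2 :=
      sq_sum_le_card_mul_sum_sq
    have hcard : ((Finset.Icc 1 (m+1)).card : ℝ) = (m : ℝ) + 1 := by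
      rw [Nat.card_Icc]; push_cast; ring
    have habs : ∑ j ∈ Finset.Icc 1 (m+1), |T j ω| ^ 2
        = ∑ j ∈ Finset.Icc 1 (m+1), (T j ω) ^ 2 := by
      refine Finset.sum_congr rfl fun j _ => sq_abs _
    rw [hcard, habs] at hcs
    calc (1 / (n:ℝ)) ^ 2 * (∑ j ∈ Finset.Icc 1 (m+1), |T j ω|) ^ 2
        ≤ (1 / (n:ℝ)) ^ 2 * (((m:ℝ)+1) * ∑ j ∈ Finset.Icc 1 (m+1), (T j ω) ^ 2) :=
          mul_le_mul_of_nonneg_left hcs (by positivity)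
      _ = ((m : ℝ) + 1) / (n : ℝ) ^ 2 * ∑ j ∈ Finset.Icc 1 (m+1), (T j ω) ^ 2 := by
          field_simp
  -- integrability facts
  have hbd : ∀ i, 1 ≤ i → ∀ᵐ ω ∂P, |Θ i ω| ≤ a := fun i hi => ae_mem_Icc (hm i) (hunif i hi)
  have hintg : ∀ i, 1 ≤ i → Integrable (Θ i) P := fun i hi =>
    (integrable_const a).mono' (hm i).aestronglyMeasurable
      ((hbd i hi).mono fun ω h => by rwa [Real.norm_eq_abs])
  have hprod_int : ∀ i k, 1 ≤ i → 1 ≤ k → Integrable (fun ω => Θ i ω * Θ k ω) P := by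
    intro i k hi hk
    refine (integrable_const (a * a)).mono' ((hm i).mul (hm k)).aestronglyMeasurable ?_
    filter_upwards [hbd i hi, hbd k hk] with ω h1 h2
    rw [Real.norm_eq_abs, abs_mul]
    exact mul_le_mul h1 h2 (abs_nonneg _) ha.le
  have hEzero : ∀ i, 1 ≤ i → ∫ ω, Θ i ω ∂P = 0 := fun i hi =>
    integral_unif_zero (by linarith) (hm i) (hunif i hi)
  have hcross : ∀ i k, 1 ≤ i → 1 ≤ k → i ≠ k → ∫ ω, Θ i ω * Θ k ω ∂P = 0 := by
    intro i k hi hk hik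
    simpa [hEzero i hi, hEzero k hk] using
      (hind.indepFun hik).integral_fun_mul_eq_mul_integral (hintg i hi).aestronglyMeasurable
        (hintg k hk).aestronglyMeasurable
  have hTexp : ∀ j, (fun ω => (T j ω) ^ 2)
      = fun ω => ∑ i ∈ Finset.Ico 1 j, ∑ k ∈ Finset.Ico 1 j, Θ i ω * Θ k ω := by
    intro j; funext ω
    rw [hT_def]; rw [sq]
    exact Finset.sum_mul_sum _ _ _ _
  have hTsq_int : ∀ j, Integrable (fun ω => (T j ω) ^ 2) P := by
    intro j
    rw [hTexp j]
    exact integrable_finset_sum _ fun i hi => integrable_finset_sum _ fun k hk =>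
      hprod_int i k (Finset.mem_Ico.1 hi).1 (Finset.mem_Ico.1 hk).1
  have hTsq : ∀ j, ∫ ω, (T j ω) ^ 2 ∂P ≤ (j : ℝ) * a ^ 2 := by
    intro j
    rw [hTexp j]
    rw [integral_finset_sum _ (fun i hi => integrable_finset_sum _ fun k hk =>
      hprod_int i k (Finset.mem_Ico.1 hi).1 (Finset.mem_Ico.1 hk).1)]
    have step : ∀ i ∈ Finset.Ico 1 j,
        ∫ ω, (∑ k ∈ Finset.Ico 1 j, Θ i ω * Θ k ω) ∂P ≤ a ^ 2 := by
      intro i hi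
      rw [integral_finset_sum _ (fun k hk =>
        hprod_int i k (Finset.mem_Ico.1 hi).1 (Finset.mem_Ico.1 hk).1)]
      have hterm : ∀ k ∈ Finset.Ico 1 j,
          ∫ ω, Θ i ω * Θ k ω ∂P ≤ if i = k then a ^ 2 else 0 := by
        intro k hk
        by_cases h : i = k
        · subst h
          rw [if_pos rfl]
          refine le_trans (integral_mono_ae (hprod_int i i (Finset.mem_Ico.1 hi).1
            (Finset.mem_Ico.1 hi).1) (integrable_const (a ^ 2)) ?_) (by simp)
          filter_upwards [hbd i (Finset.mem_Ico.1 hi).1] with ω hω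
          nlinarith [abs_nonneg (Θ i ω), ha.le, neg_abs_le (Θ i ω), le_abs_self (Θ i ω)]
        · rw [if_neg h]
          exact le_of_eq (hcross i k (Finset.mem_Ico.1 hi).1 (Finset.mem_Ico.1 hk).1 h)
      calc ∑ k ∈ Finset.Ico 1 j, ∫ ω, Θ i ω * Θ k ω ∂P
          ≤ ∑ k ∈ Finset.Ico 1 j, if i = k then a ^ 2 else 0 := Finset.sum_le_sum hterm
        _ = a ^ 2 := by rw [Finset.sum_ite_eq]; simp [hi]
    calc ∑ i ∈ Finset.Ico 1 j, ∫ ω, (∑ k ∈ Finset.Ico 1 j, Θ i ω * Θ k ω) ∂P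
        ≤ ∑ i ∈ Finset.Ico 1 j, a ^ 2 := Finset.sum_le_sum step
      _ = ((j - 1 : ℕ) : ℝ) * a ^ 2 := by rw [Finset.sum_const, Nat.card_Ico]; simp
      _ ≤ (j : ℝ) * a ^ 2 := by
          have : ((j - 1 : ℕ) : ℝ) ≤ (j : ℝ) := by
            have : (j - 1 : ℕ) ≤ j := Nat.sub_le _ _
            exact_mod_cast this
          nlinarith [sq_nonneg a]
  -- put it together
  have hGint : Integrable (fun ω => ((m : ℝ) + 1) / (n : ℝ) ^ 2
      * ∑ j ∈ Finset.Icc 1 (m+1), (T j ω) ^ 2) P :=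
    (integrable_finset_sum _ fun j _ => hTsq_int j).const_mul _
  calc ∫ ω, ‖(1 / (n : ℂ)) * interpX Θ n t ω - (t : ℂ) * walkU Θ 1 ω‖ ^ 2 ∂P
      ≤ ∫ ω, ((m : ℝ) + 1) / (n : ℝ) ^ 2 * ∑ j ∈ Finset.Icc 1 (m+1), (T j ω) ^ 2 ∂P :=
        integral_mono_of_nonneg (ae_of_all _ fun ω => sq_nonneg _) hGint (ae_of_all _ hB2)
    _ = ((m : ℝ) + 1) / (n : ℝ) ^ 2 * ∑ j ∈ Finset.Icc 1 (m+1), ∫ ω, (T j ω) ^ 2 ∂P := by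
        rw [integral_const_mul, integral_finset_sum _ fun j _ => hTsq_int j]
    _ ≤ ((m : ℝ) + 1) / (n : ℝ) ^ 2 * ∑ j ∈ Finset.Icc 1 (m+1), (j : ℝ) * a ^ 2 := by
        refine mul_le_mul_of_nonneg_left (Finset.sum_le_sum fun j _ => hTsq j) (by positivity)
    _ ≤ ((m : ℝ) + 1) / (n : ℝ) ^ 2 * (((m : ℝ) + 1) * (((m : ℝ) + 1) * a ^ 2)) := by
        refine mul_le_mul_of_nonneg_left ?_ (by positivity)
        calc ∑ j ∈ Finset.Icc 1 (m+1), (j : ℝ) * a ^ 2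
            ≤ ∑ j ∈ Finset.Icc 1 (m+1), ((m : ℝ) + 1) * a ^ 2 := by
              refine Finset.sum_le_sum fun j hj => ?_
              have hj2 : (j : ℝ) ≤ (m : ℝ) + 1 := by
                have := (Finset.mem_Icc.1 hj).2; exact_mod_cast this
              nlinarith [sq_nonneg a]
          _ = ((m : ℝ) + 1) * (((m : ℝ) + 1) * a ^ 2) := by
              rw [Finset.sum_const, Nat.card_Icc]; push_cast; ring
    _ ≤ 8 * n * a ^ 2 := by
        have hm1 : (m : ℝ) + 1 ≤ 2 * (n : ℝ) := by
          have h1 : (m : ℝ) ≤ (n : ℝ) := by exact_mod_cast hmn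
          have h2 : (1 : ℝ) ≤ (n : ℝ) := by exact_mod_cast hn
          linarith
        have hnpos : (0 : ℝ) < (n : ℝ) := by exact_mod_cast hn
        rw [div_mul_eq_mul_div, div_le_iff₀ (by positivity)]
        have key : ((m : ℝ) + 1) ^ 3 ≤ 8 * (n : ℝ) ^ 3 := by
          have := pow_le_pow_left₀ (by positivity : (0:ℝ) ≤ (m:ℝ)+1) hm1 3
          nlinarith
        nlinarith [mul_le_mul_of_nonneg_right key (sq_nonneg a)]

lemma measurable_walkU {Ω : Type*} [MeasurableSpace Ω] {Θ : ℕ → Ω → ℝ}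
    (hΘ : ∀ i, Measurable (Θ i)) (j : ℕ) : Measurable (walkU Θ j) := by
  unfold walkU
  exact Complex.measurable_exp.comp (measurable_const.mul
    (Complex.measurable_ofReal.comp (Finset.measurable_sum _ fun i _ => hΘ i)))

lemma norm_walkU {Ω : Type*} (Θ : ℕ → Ω → ℝ) (j : ℕ) (ω : Ω) : ‖walkU Θ j ω‖ = 1 := by
  unfold walkU; rw [mul_comm]; exact Complex.norm_exp_ofReal_mul_I _

lemma measurable_interpX {Ω : Type*} [MeasurableSpace Ω] {Θ : ℕ → Ω → ℝ}
    (hΘ : ∀ i, Measurable (Θ i)) (n : ℕ) (t : ℝ) : Measurable (interpX Θ n t) := by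
  unfold interpX
  exact (Finset.measurable_sum _ fun j _ => measurable_walkU hΘ j).add
    (measurable_const.mul (measurable_walkU hΘ _))

lemma norm_interpX_le {Ω : Type*} (Θ : ℕ → Ω → ℝ) (n : ℕ) {t : ℝ} (ht : 0 ≤ t) (ω : Ω) :
    ‖interpX Θ n t ω‖ ≤ (n : ℝ) * t := by
  set m : ℕ := ⌊(n : ℝ) * t⌋₊ with hm_def
  have hnt0 : (0:ℝ) ≤ (n : ℝ) * t := by positivity
  have hmle : (m : ℝ) ≤ (n : ℝ) * t := Nat.floor_le hnt0
  unfold interpX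
  rw [← hm_def]
  calc ‖(∑ j ∈ Finset.Icc 1 m, walkU Θ j ω)
        + (((n : ℝ) * t - m : ℝ) : ℂ) * walkU Θ (m + 1) ω‖
      ≤ ‖∑ j ∈ Finset.Icc 1 m, walkU Θ j ω‖
        + ‖(((n : ℝ) * t - m : ℝ) : ℂ) * walkU Θ (m + 1) ω‖ := norm_add_le _ _
    _ ≤ (m : ℝ) + ((n : ℝ) * t - m) := by
        refine add_le_add ?_ ?_
        · calc ‖∑ j ∈ Finset.Icc 1 m, walkU Θ j ω‖
              ≤ ∑ j ∈ Finset.Icc 1 m, ‖walkU Θ j ω‖ := norm_sum_le _ _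
            _ = (m : ℝ) := by
                simp only [norm_walkU]
                rw [Finset.sum_const, Nat.card_Icc]; simp
        · rw [norm_mul, norm_walkU, mul_one, Complex.norm_real, Real.norm_eq_abs,
            abs_of_nonneg (by linarith)]
    _ = (n : ℝ) * t := by ring

lemma map_walkU_one {Ω : Type*} [MeasurableSpace Ω] {P : Measure Ω} {Θ : ℕ → Ω → ℝ}
    (hΘ : Measurable (Θ 0)) (h0 : Measure.map (Θ 0) P = unifOn (Ico 0 (2 * Real.pi))) :
    Measure.map (walkU Θ 1) P = circleUnif := by
  have he : walkU Θ 1 = (fun θ : ℝ => Complex.exp (Complex.I * θ)) ∘ (Θ 0) := by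
    funext ω; simp [walkU]
  have hc : Measurable (fun θ : ℝ => Complex.exp (Complex.I * θ)) :=
    (Complex.continuous_exp.comp (continuous_const.mul Complex.continuous_ofReal)).measurable
  rw [he, ← Measure.map_map hc hΘ, h0]
  rfl


/-- Triangular array of circle walks with `n·α_n² → 0`: for each fixed `t ∈ [0,1]`,
`E[‖(1/n)X^n_t - t·U_{1,n}‖²] → 0`, and consequently the rescaled path converges in
finite-dimensional distributions to the straight line `t ↦ tU`, `U` uniform on `S¹`. -/
theorem stmt_13 {Ω : Type*} [MeasureSpace Ω] (P : Measure Ω) [IsProbabilityMeasure P]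
    (α : ℕ → ℝ) (hα : ∀ n, 0 < α n ∧ α n ≤ Real.pi)
    (hα0 : Tendsto α atTop (nhds 0))
    (hslow : Tendsto (fun n : ℕ => (n : ℝ) * α n ^ 2) atTop (nhds 0))
    (Θ : ℕ → ℕ → Ω → ℝ) (hmeas : ∀ n i, Measurable (Θ n i))
    (hindep : ∀ n, iIndepFun (Θ n) P)
    (h0 : ∀ n, Measure.map (Θ n 0) P = unifOn (Ico 0 (2 * Real.pi)))
    (hunif : ∀ n, ∀ i ≥ 1, Measure.map (Θ n i) P = unifOn (Icc (-(α n)) (α n))) :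
    (∀ t ∈ Set.Icc (0 : ℝ) 1,
      Tendsto
        (fun n : ℕ => ∫ ω, ‖(1 / (n : ℂ)) * interpX (Θ n) n t ω - (t : ℂ) * walkU (Θ n) 1 ω‖ ^ 2 ∂P)
        atTop (nhds 0)) ∧
    (∀ (k : ℕ) (t : Fin k → ℝ), (∀ i, t i ∈ Set.Icc (0 : ℝ) 1) →
      ∀ g : (Fin k → ℂ) →ᵇ ℝ,
        Tendsto (fun n : ℕ => ∫ ω, g (fun i => (1 / (n : ℂ)) * interpX (Θ n) n (t i) ω) ∂P)
          atTop (nhds (∫ z, g (fun i => (t i : ℂ) * z) ∂circleUnif))) := by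
  have part1 : ∀ t ∈ Set.Icc (0 : ℝ) 1,
      Tendsto
        (fun n : ℕ => ∫ ω, ‖(1 / (n : ℂ)) * interpX (Θ n) n t ω - (t : ℂ) * walkU (Θ n) 1 ω‖ ^ 2 ∂P)
        atTop (nhds 0) := by
    intro t ht
    have h8 : Tendsto (fun n : ℕ => 8 * ((n : ℝ) * α n ^ 2)) atTop (nhds 0) := by
      simpa using hslow.const_mul (8 : ℝ)
    refine tendsto_of_tendsto_of_tendsto_of_le_of_le' tendsto_const_nhds h8 ?_ ?_
    · exact Eventually.of_forall fun n => integral_nonneg fun ω => sq_nonneg _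
    · filter_upwards [eventually_ge_atTop 1] with n hn
      calc ∫ ω, ‖(1 / (n : ℂ)) * interpX (Θ n) n t ω - (t : ℂ) * walkU (Θ n) 1 ω‖ ^ 2 ∂P
          ≤ 8 * n * α n ^ 2 :=
            part1_bound P (hα n).1 (Θ n) (hmeas n) (hindep n) (hunif n) ht.1 ht.2 hn
        _ = 8 * ((n : ℝ) * α n ^ 2) := by ring
  refine ⟨part1, ?_⟩
  intro k t ht g
  have hg_cont : Continuous (fun z : ℂ => g (fun i => (t i : ℂ) * z)) :=
    g.continuous.comp (continuous_pi fun i => continuous_const.mul continuous_id)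
  have hlaw : ∀ n : ℕ, ∫ ω, g (fun i => (t i : ℂ) * walkU (Θ n) 1 ω) ∂P
      = ∫ z, g (fun i => (t i : ℂ) * z) ∂circleUnif := by
    intro n
    have hmap := map_walkU_one (hmeas n 0) (h0 n)
    rw [← hmap, integral_map (measurable_walkU (hmeas n) 1).aemeasurable
      hg_cont.aestronglyMeasurable]
  have hDmeas : ∀ (n : ℕ) (s : ℝ), Measurable (fun ω =>
      ‖(1 / (n : ℂ)) * interpX (Θ n) n s ω - (s : ℂ) * walkU (Θ n) 1 ω‖ ^ 2) := by
    intro n s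
    exact (((measurable_const.mul (measurable_interpX (hmeas n) n s)).sub
      (measurable_const.mul (measurable_walkU (hmeas n) 1))).norm.pow_const 2)
  have hVle : ∀ (n : ℕ) (s : ℝ), 0 ≤ s → s ≤ 1 → ∀ ω : Ω,
      ‖(1 / (n : ℂ)) * interpX (Θ n) n s ω‖ ≤ 1 := by
    intro n s hs0 hs1 ω
    rcases Nat.eq_zero_or_pos n with hn | hn
    · subst hn; simp
    · rw [norm_mul]
      have h1 : ‖(1 / (n : ℂ))‖ = 1 / (n : ℝ) := by simp
      rw [h1]
      have h2 := norm_interpX_le (Θ n) n hs0 ω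
      have hnpos : (0 : ℝ) < n := by exact_mod_cast hn
      calc 1 / (n : ℝ) * ‖interpX (Θ n) n s ω‖ ≤ 1 / (n : ℝ) * ((n : ℝ) * s) :=
            mul_le_mul_of_nonneg_left h2 (by positivity)
        _ = s := by field_simp
        _ ≤ 1 := hs1
  have hWle : ∀ (n : ℕ) (i : Fin k) (ω : Ω), ‖(t i : ℂ) * walkU (Θ n) 1 ω‖ ≤ 1 := by
    intro n i ω
    rw [norm_mul, norm_walkU, mul_one, Complex.norm_real, Real.norm_eq_abs,
      abs_of_nonneg (ht i).1]
    exact (ht i).2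
  have hdiffint : ∀ (n : ℕ) (i : Fin k), Integrable (fun ω =>
      ‖(1 / (n : ℂ)) * interpX (Θ n) n (t i) ω - (t i : ℂ) * walkU (Θ n) 1 ω‖ ^ 2) P := by
    intro n i
    refine (integrable_const (4 : ℝ)).mono' (hDmeas n (t i)).aestronglyMeasurable ?_
    refine Eventually.of_forall fun ω => ?_
    have h1 : ‖(1 / (n : ℂ)) * interpX (Θ n) n (t i) ω - (t i : ℂ) * walkU (Θ n) 1 ω‖ ≤ 2 := by
      calc ‖(1 / (n : ℂ)) * interpX (Θ n) n (t i) ω - (t i : ℂ) * walkU (Θ n) 1 ω‖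
          ≤ ‖(1 / (n : ℂ)) * interpX (Θ n) n (t i) ω‖ + ‖(t i : ℂ) * walkU (Θ n) 1 ω‖ :=
            norm_sub_le _ _
        _ ≤ 1 + 1 := add_le_add (hVle n (t i) (ht i).1 (ht i).2 ω) (hWle n i ω)
        _ = 2 := by norm_num
    rw [Real.norm_eq_abs, abs_of_nonneg (sq_nonneg _)]
    nlinarith [norm_nonneg ((1 / (n : ℂ)) * interpX (Θ n) n (t i) ω - (t i : ℂ) * walkU (Θ n) 1 ω)]
  have hgint : ∀ (F : Ω → Fin k → ℂ), Measurable F → Integrable (fun ω => g (F ω)) P := by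
    intro F hF
    refine (integrable_const ‖g‖).mono' (g.continuous.measurable.comp hF).aestronglyMeasurable ?_
    exact Eventually.of_forall fun ω => g.norm_coe_le_norm (F ω)
  have hVmeas : ∀ n : ℕ, Measurable (fun ω => (fun i => (1 / (n : ℂ)) * interpX (Θ n) n (t i) ω)) :=
    fun n => measurable_pi_lambda _ fun i =>
      measurable_const.mul (measurable_interpX (hmeas n) n (t i))
  have hWmeas : ∀ n : ℕ, Measurable (fun ω => (fun i : Fin k => (t i : ℂ) * walkU (Θ n) 1 ω)) :=
    fun n => measurable_pi_lambda _ fun i => measurable_const.mul (measurable_walkU (hmeas n) 1)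
  have hS : Tendsto (fun n : ℕ => ∑ i : Fin k,
      ∫ ω, ‖(1 / (n : ℂ)) * interpX (Θ n) n (t i) ω - (t i : ℂ) * walkU (Θ n) 1 ω‖ ^ 2 ∂P)
      atTop (nhds 0) := by
    have := tendsto_finset_sum (Finset.univ : Finset (Fin k)) (fun i _ => part1 (t i) (ht i))
    simpa using this
  rw [Metric.tendsto_atTop]
  intro ε hε
  obtain ⟨δ, hδpos, hδ⟩ : ∃ δ > 0, ∀ x y : Fin k → ℂ, dist y 0 ≤ 1 → dist x y ≤ δ →
      |g x - g y| ≤ ε / 4 := by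
    have hK : IsCompact (Metric.closedBall (0 : Fin k → ℂ) 2) := isCompact_closedBall _ _
    have hu := hK.uniformContinuousOn_of_continuous g.continuous.continuousOn
    rw [Metric.uniformContinuousOn_iff] at hu
    obtain ⟨δ, hδpos, hδ'⟩ := hu (ε / 4) (by positivity)
    refine ⟨min (δ / 2) 1, by positivity, fun x y hy hxy => ?_⟩
    have hyK : y ∈ Metric.closedBall (0 : Fin k → ℂ) 2 := by
      rw [Metric.mem_closedBall]
      exact hy.trans one_le_two
    have hxK : x ∈ Metric.closedBall (0 : Fin k → ℂ) 2 := by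
      rw [Metric.mem_closedBall]
      calc dist x 0 ≤ dist x y + dist y 0 := dist_triangle _ _ _
        _ ≤ 1 + 1 := add_le_add (hxy.trans (min_le_right _ _)) hy
        _ ≤ 2 := by norm_num
    have h := hδ' x hxK y hyK (lt_of_le_of_lt (hxy.trans (min_le_left _ _)) (by linarith))
    rw [Real.dist_eq] at h
    exact h.le
  set C : ℝ := 2 * ‖g‖ / δ ^ 2 with hC_def
  have hC0 : 0 ≤ C := by positivity
  have hpt : ∀ (n : ℕ) (ω : Ω),
      |g (fun i => (1 / (n : ℂ)) * interpX (Θ n) n (t i) ω)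
        - g (fun i => (t i : ℂ) * walkU (Θ n) 1 ω)|
      ≤ ε / 4 + C * ∑ i : Fin k,
          ‖(1 / (n : ℂ)) * interpX (Θ n) n (t i) ω - (t i : ℂ) * walkU (Θ n) 1 ω‖ ^ 2 := by
    intro n ω
    set x : Fin k → ℂ := fun i => (1 / (n : ℂ)) * interpX (Θ n) n (t i) ω with hx
    set y : Fin k → ℂ := fun i => (t i : ℂ) * walkU (Θ n) 1 ω with hy
    have hsumnn : 0 ≤ ∑ i : Fin k, ‖x i - y i‖ ^ 2 :=
      Finset.sum_nonneg fun i _ => sq_nonneg _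
    by_cases hd : dist x y ≤ δ
    · have hy1 : dist y 0 ≤ 1 := by
        rw [dist_pi_le_iff zero_le_one]
        intro i
        simp only [Pi.zero_apply, dist_zero_right]
        exact hWle n i ω
      have h := hδ x y hy1 hd
      nlinarith [mul_nonneg hC0 hsumnn]
    · push_neg at hd
      have hex : ∃ i, δ < dist (x i) (y i) := by
        by_contra hcon
        push_neg at hcon
        exact absurd ((dist_pi_le_iff hδpos.le).2 fun i => hcon i) (not_le.2 hd)
      obtain ⟨i, hi⟩ := hex
      have hsum : δ ^ 2 ≤ ∑ i : Fin k, ‖x i - y i‖ ^ 2 := by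
        calc δ ^ 2 ≤ ‖x i - y i‖ ^ 2 := by
              rw [← dist_eq_norm]
              nlinarith [dist_nonneg (x := x i) (y := y i)]
          _ ≤ _ := Finset.single_le_sum (f := fun i => ‖x i - y i‖ ^ 2)
              (fun i _ => sq_nonneg _) (Finset.mem_univ i)
      have hg2 : |g x - g y| ≤ 2 * ‖g‖ := by
        calc |g x - g y| ≤ |g x| + |g y| := abs_sub _ _
          _ ≤ ‖g‖ + ‖g‖ := add_le_add (g.norm_coe_le_norm x) (g.norm_coe_le_norm y)
          _ = 2 * ‖g‖ := by ring
      have hC2 : 2 * ‖g‖ ≤ C * ∑ i : Fin k, ‖x i - y i‖ ^ 2 := by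
        rw [hC_def, div_mul_eq_mul_div, le_div_iff₀ (by positivity)]
        nlinarith [norm_nonneg g]
      have hε4 : (0:ℝ) ≤ ε / 4 := by positivity
      linarith
  have key : ∀ n : ℕ,
      dist (∫ ω, g (fun i => (1 / (n : ℂ)) * interpX (Θ n) n (t i) ω) ∂P)
        (∫ z, g (fun i => (t i : ℂ) * z) ∂circleUnif)
      ≤ ε / 4 + C * ∑ i : Fin k,
          ∫ ω, ‖(1 / (n : ℂ)) * interpX (Θ n) n (t i) ω - (t i : ℂ) * walkU (Θ n) 1 ω‖ ^ 2 ∂P := by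
    intro n
    rw [Real.dist_eq, ← hlaw n, ← integral_sub (hgint _ (hVmeas n)) (hgint _ (hWmeas n))]
    have habs : |∫ ω, (g (fun i => (1 / (n : ℂ)) * interpX (Θ n) n (t i) ω)
        - g (fun i => (t i : ℂ) * walkU (Θ n) 1 ω)) ∂P|
        ≤ ∫ ω, |g (fun i => (1 / (n : ℂ)) * interpX (Θ n) n (t i) ω)
            - g (fun i => (t i : ℂ) * walkU (Θ n) 1 ω)| ∂P := by
      simpa [Real.norm_eq_abs] using norm_integral_le_integral_norm (μ := P)
        (fun ω => g (fun i => (1 / (n : ℂ)) * interpX (Θ n) n (t i) ω)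
          - g (fun i => (t i : ℂ) * walkU (Θ n) 1 ω))
    refine habs.trans ?_
    have hrint : Integrable (fun ω => ε / 4 + C * ∑ i : Fin k,
        ‖(1 / (n : ℂ)) * interpX (Θ n) n (t i) ω - (t i : ℂ) * walkU (Θ n) 1 ω‖ ^ 2) P :=
      (integrable_const _).add ((integrable_finset_sum _ fun i _ => hdiffint n i).const_mul _)
    refine (integral_mono (((hgint _ (hVmeas n)).sub (hgint _ (hWmeas n))).abs) hrint
      (fun ω => hpt n ω)).trans ?_
    rw [integral_add (integrable_const _)
      ((integrable_finset_sum _ fun i _ => hdiffint n i).const_mul _),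
      integral_const, integral_const_mul, integral_finset_sum _ fun i _ => hdiffint n i]
    simp [measure_univ]
  have hCS : Tendsto (fun n : ℕ => ε / 4 + C * ∑ i : Fin k,
      ∫ ω, ‖(1 / (n : ℂ)) * interpX (Θ n) n (t i) ω - (t i : ℂ) * walkU (Θ n) 1 ω‖ ^ 2 ∂P)
      atTop (nhds (ε / 4)) := by
    have h := (tendsto_const_nhds (x := ε / 4) (f := atTop (α := ℕ))).add (hS.const_mul C)
    simpa using h
  have hev := hCS.eventually_lt_const (show ε / 4 < ε / 2 by linarith)
  rw [eventually_atTop] at hev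
  obtain ⟨N, hN⟩ := hev
  exact ⟨N, fun n hn => lt_of_le_of_lt (key n) (lt_of_lt_of_le (hN n hn) (by linarith))⟩
end
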